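/- arXiv:math/0407498 — 5 statements merged into one kernel-verified Lean document; each statement's English description precedes it below -/
import Mathlib

section
/- If λ is a regular uncountable cardinal and D is a weakly reasonable uniform ultrafilter on λ, then D is a regular ultrafilter: there is a sequence ⟨A_ε : ε < λ⟩ of members of D such that for every α < λ the set {ε < λ : α ∈ A_ε} is finite. -/
open Set Ordinal Cardinal

noncomputable section

namespace Sh830

/-- `D` is a (proper) ultrafilter on the set `Z` of ordinals. -/
def IsUltraOn (Z : Set Ordinal) (D : Set (Set Ordinal)) : Prop :=
  (∀ A ∈ D, A ⊆ Z) ∧ Z ∈ D ∧ ∅ ∉ D ∧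
  (∀ A B : Set Ordinal, A ∈ D → A ⊆ B → B ⊆ Z → B ∈ D) ∧
  (∀ A B : Set Ordinal, A ∈ D → B ∈ D → A ∩ B ∈ D) ∧
  (∀ A : Set Ordinal, A ⊆ Z → A ∈ D ∨ Z \ A ∈ D)

/-- `D` is an ultrafilter on `λ`, where `λ` is identified with the set of ordinals `< λ`. -/
def IsUltrafilterOn (l : Ordinal) (D : Set (Set Ordinal)) : Prop :=
  IsUltraOn (Iio l) D

/-- `D` is uniform: every member of `D` has cardinality `λ`. -/
def IsUniformOn (l : Ordinal) (D : Set (Set Ordinal)) : Prop :=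
  ∀ A ∈ D, #A = #(Iio l)

/-- `C` is a club (closed and unbounded) subset of `λ`. -/
def IsClubIn (C : Set Ordinal) (l : Ordinal) : Prop :=
  C ⊆ Iio l ∧
  (∀ δ, δ < l → δ ≠ 0 → sSup (C ∩ Iio δ) = δ → δ ∈ C) ∧
  (∀ α, α < l → ∃ β ∈ C, α < β)

/-- The quotient `D/f = {A ⊆ λ : f⁻¹(A) ∈ D}`. -/
def quotUF (l : Ordinal) (D : Set (Set Ordinal)) (f : Ordinal → Ordinal) :
    Set (Set Ordinal) :=
  {A | A ⊆ Iio l ∧ Iio l ∩ f ⁻¹' A ∈ D}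

/-- The family `F_λ` of all non-decreasing functions `λ → λ` with unbounded range. -/
def Flam (l : Ordinal) : Set (Ordinal → Ordinal) :=
  {f | (∀ α, α < l → f α < l) ∧ (∀ α β, α ≤ β → β < l → f α ≤ f β) ∧
    (∀ γ, γ < l → ∃ α, α < l ∧ γ ≤ f α)}

/-- `D` is weakly reasonable: for every `f ∈ F_λ` there is a club `C` of `λ` with
`∪ {[δ, δ + f δ) : δ ∈ C} ∉ D`. -/
def WeaklyReasonable (l : Ordinal) (D : Set (Set Ordinal)) : Prop :=
  ∀ f ∈ Flam l, ∃ C, IsClubIn C l ∧ (⋃ δ ∈ C, Ico δ (δ + f δ)) ∉ D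

/-- The order type of a set of ordinals: the (unique) ordinal order-isomorphic to it. -/
def setOtp (S : Set Ordinal) : Ordinal :=
  sInf {o : Ordinal | Nonempty (Iio o ≃o S)}

/-- `min(β/E)`: the least element of the `E`-equivalence class of `β`. -/
def minClass (E : Ordinal → Ordinal → Prop) (β : Ordinal) : Ordinal :=
  sInf {γ | E γ β}

/-- The function `f_E` associated with an equivalence relation `E`:
`f_E α = otp {β < α : β = min(β/E) < min(α/E)}`. -/
def fEquiv (E : Ordinal → Ordinal → Prop) (α : Ordinal) : Ordinal :=
  setOtp {β | β < α ∧ β = minClass E β ∧ minClass E β < minClass E α}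

/-- The equivalence relation `E_C` associated with a club `C`:
`α E_C β` iff `(∀ γ ∈ C)(α < γ ↔ β < γ)`. -/
def clubRel (C : Set Ordinal) (α β : Ordinal) : Prop :=
  ∀ γ ∈ C, (α < γ ↔ β < γ)

/-- The quotient `D/C = D/E_C = D/f_{E_C}`. -/
def quotClub (l : Ordinal) (D : Set (Set Ordinal)) (C : Set Ordinal) :
    Set (Set Ordinal) :=
  quotUF l D (fEquiv (clubRel C))

/-- A strategy for Odd in the game `⅁_D`: given `i < λ`, Even's moves `β_j = α_{2j}`
for `j ≤ i`, and Odd's previous moves `γ_j = α_{2j+1}` for `j < i`, it produces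
Odd's move `γ_i = α_{2i+1}`. -/
def OddStr : Type 1 :=
  (i : Ordinal) → ((j : Ordinal) → j ≤ i → Ordinal) → ((j : Ordinal) → j < i → Ordinal) → Ordinal

/-- A legal position of the game just before Odd's `i`-th move. -/
def IsPosition (l i : Ordinal) (β γ : Ordinal → Ordinal) : Prop :=
  i < l ∧ (∀ j, j ≤ i → β j < l) ∧ (∀ j, j < i → β j < γ j ∧ γ j < l) ∧
  (∀ j, j < i → γ j < β (j + 1)) ∧
  (∀ j, j ≤ i → Order.IsSuccLimit j → β j = sSup (γ '' Iio j))

/-- A complete legal play of the game of length `λ`: `β i` is `α_{2i}`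
(Even's move) and `γ i` is `α_{2i+1}` (Odd's move). -/
def IsPlay (l : Ordinal) (β γ : Ordinal → Ordinal) : Prop :=
  (∀ i, i < l → β i < l ∧ γ i < l) ∧ (∀ i, i < l → β i < γ i) ∧
  (∀ i, i + 1 < l → γ i < β (i + 1)) ∧
  (∀ i, i < l → Order.IsSuccLimit i → β i = sSup (γ '' Iio i))

/-- `st` is a legal strategy for Odd: at every legal position it produces a legal move,
i.e. an ordinal `α_{2i+1}` with `α_{2i} < α_{2i+1} < λ`. -/
def IsOddStrategy (l : Ordinal) (st : OddStr) : Prop :=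
  ∀ i β γ, IsPosition l i β γ →
    β i < st i (fun j _ => β j) (fun j _ => γ j) ∧
    st i (fun j _ => β j) (fun j _ => γ j) < l

/-- The play `(β, γ)` follows the strategy `st` of Odd. -/
def FollowsOdd (l : Ordinal) (st : OddStr) (β γ : Ordinal → Ordinal) : Prop :=
  ∀ i, i < l → γ i = st i (fun j _ => β j) (fun j _ => γ j)

/-- `st` is winning for Odd in `⅁_D`: in every play following it, Even loses, i.e.
`∪ {[α_{2i+1}, α_{2i+2}) : i < λ} ∉ D`. -/
def OddWinsWith (l : Ordinal) (D : Set (Set Ordinal)) (st : OddStr) : Prop :=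
  ∀ β γ, IsPlay l β γ → FollowsOdd l st β γ →
    (⋃ i ∈ Iio l, Ico (γ i) (β (i + 1))) ∉ D

/-- The next element of `C` above `δ`, i.e. `min (C \ (δ+1))`. -/
def nxt (C : Set Ordinal) (δ : Ordinal) : Ordinal := sInf (C ∩ Ioi δ)

/-- A condition of the forcing notion `Q¹_λ`; here `Z^p_δ = [δ, nxt C δ)` and
`d δ` is the ultrafilter `d^p_δ` on `Z^p_δ`. -/
structure Q1 (l : Ordinal) where
  γ : Ordinal
  C : Set Ordinal
  d : Ordinal → Set (Set Ordinal)
  γ_lt : γ < l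
  club : IsClubIn C l
  lim : ∀ δ ∈ C, Order.IsSuccLimit δ
  ultra : ∀ δ ∈ C, IsUltraOn (Ico δ (nxt C δ)) (d δ)

/-- The order of `Q¹_λ`. -/
def Q1le (l : Ordinal) (p q : Q1 l) : Prop :=
  p.γ ≤ q.γ ∧ p.C ∩ Iio p.γ ⊆ q.C ∧ q.C ⊆ p.C ∧
  ∀ δ ∈ q.C, ∀ A ∈ q.d δ,
    ∃ ζ ∈ p.C ∩ Ico δ (nxt q.C δ), A ∩ Ico ζ (nxt p.C ζ) ∈ p.d ζ

/-- A condition of the forcing notion `Q⁰_λ`; here `Z^p_δ = [δ, nxt C δ)` and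
`d δ` is the ultrafilter `d^p_δ` on `Z^p_δ`. -/
structure Q0 (l : Ordinal) where
  C : Set Ordinal
  d : Ordinal → Set (Set Ordinal)
  club : IsClubIn C l
  lim : ∀ δ ∈ C, Order.IsSuccLimit δ
  ultra : ∀ δ ∈ C, IsUltraOn (Ico δ (nxt C δ)) (d δ)

/-- The order relation of `Q⁰_λ`, on the underlying data. -/
def Q0leAux (Cp : Set Ordinal) (dp : Ordinal → Set (Set Ordinal))
    (Cq : Set Ordinal) (dq : Ordinal → Set (Set Ordinal)) : Prop :=
  Cq ⊆ Cp ∧ ∀ δ ∈ Cq, ∀ A ∈ dq δ,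
    ∃ ζ ∈ Cp ∩ Ico δ (nxt Cq δ), A ∩ Ico ζ (nxt Cp ζ) ∈ dp ζ

/-- The order `≤_{Q⁰_λ}`. -/
def Q0le (l : Ordinal) (p q : Q0 l) : Prop := Q0leAux p.C p.d q.C q.d

/-- The relation `≤*_{Q⁰_λ}`: for some `α < λ` the restrictions beyond `α` are
`≤_{Q⁰_λ}`-related. -/
def Q0leStar (l : Ordinal) (p q : Q0 l) : Prop :=
  ∃ α, α < l ∧ Q0leAux (p.C \ Iio α) p.d (q.C \ Iio α) q.d

/-- `fil(p) = {A ⊆ λ : (∃ ε < λ)(∀ δ ∈ C^p \ ε)(A ∩ Z^p_δ ∈ d^p_δ)}`. -/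
def fil (l : Ordinal) (p : Q0 l) : Set (Set Ordinal) :=
  {A | A ⊆ Iio l ∧ ∃ ε, ε < l ∧ ∀ δ ∈ p.C, ε ≤ δ → A ∩ Ico δ (nxt p.C δ) ∈ p.d δ}

/-- `fil(G*) = ∪ {fil(p) : p ∈ G*}`. -/
def filG (l : Ordinal) (G : Set (Q0 l)) : Set (Set Ordinal) := ⋃ p ∈ G, fil l p

/-- The relation `≤⁰`: `p ≤⁰ q` iff `fil(p) ⊆ fil(q)`. -/
def le0 (l : Ordinal) (p q : Q0 l) : Prop := fil l p ⊆ fil l q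

/-- `G` is `(<c)`-directed with respect to `le`: `G` is nonempty and every subset of `G`
of cardinality `< c` has an upper bound in `G`. -/
def DirLtOn (l : Ordinal) (c : Cardinal.{1}) (G : Set (Q0 l))
    (le : Q0 l → Q0 l → Prop) : Prop :=
  G.Nonempty ∧ ∀ S : Set (Q0 l), S ⊆ G → #S < c → ∃ r ∈ G, ∀ p ∈ S, le p r

/-- The sum `⊕^e {d_x : x ∈ X}` of ultrafilters `d x` on `Z x` along an ultrafilter `e`
on `X`. -/
def ufSum (X : Set Ordinal) (e : Set (Set Ordinal)) (Z : Ordinal → Set Ordinal)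
    (d : Ordinal → Set (Set Ordinal)) : Set (Set Ordinal) :=
  {A | A ⊆ (⋃ x ∈ X, Z x) ∧ {x | x ∈ X ∧ Z x ∩ A ∈ d x} ∈ e}

/-- The function `f_p` associated with `p ∈ Q⁰_λ`: `f_p α` is the member of `C^p` with
`otp (C^p ∩ f_p α) = ω·α + ω`. -/
def fP (l : Ordinal) (p : Q0 l) (α : Ordinal) : Ordinal :=
  sInf {β | β ∈ p.C ∧ setOtp (p.C ∩ Iio β) = Ordinal.omega0 * α + Ordinal.omega0}

/-- The space `^λλ` (functions below `l` matter). -/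
def funSp (l : Ordinal) : Set (Ordinal → Ordinal) := {f | ∀ α, α < l → f α < l}

/-- `F` is a dominating family in `^λλ`. -/
def IsDominating (l : Ordinal) (F : Set (Ordinal → Ordinal)) : Prop :=
  ∀ g ∈ funSp l, ∃ f ∈ F, ∃ α, α < l ∧ ∀ β, α < β → β < l → g β < f β

/-- The dominating number `𝔡_λ`. -/
def dLam (l : Ordinal) : Cardinal.{1} :=
  sInf {c : Cardinal | ∃ F : Set (Ordinal → Ordinal),
    F ⊆ funSp l ∧ IsDominating l F ∧ #F = c}

/-- `S` is non-stationary in `λ`. -/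
def NonStatIn (S : Set Ordinal) (l : Ordinal) : Prop :=
  ∃ C, IsClubIn C l ∧ S ∩ C = ∅

/-- `F` is a club-dominating family in `^λλ`. -/
def IsClubDominating (l : Ordinal) (F : Set (Ordinal → Ordinal)) : Prop :=
  ∀ g ∈ funSp l, ∃ f ∈ F, NonStatIn {β | β < l ∧ f β ≤ g β} l

/-- The club-dominating number `𝔡_{cl(λ)}`. -/
def dClubLam (l : Ordinal) : Cardinal.{1} :=
  sInf {c : Cardinal | ∃ F : Set (Ordinal → Ordinal),
    F ⊆ funSp l ∧ IsClubDominating l F ∧ #F = c}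

/-- `A` is a nowhere dense subset of the space `^λλ` (with basic open sets determined
by initial segments). -/
def IsNwd (l : Ordinal) (A : Set (Ordinal → Ordinal)) : Prop :=
  A ⊆ funSp l ∧
  ∀ s ∈ funSp l, ∀ α, α < l → ∃ t ∈ funSp l, ∃ α', α ≤ α' ∧ α' < l ∧
    (∀ β, β < α → t β = s β) ∧ ∀ f ∈ funSp l, (∀ β, β < α' → f β = t β) → f ∉ A

/-- `A` belongs to the ideal `M^λ_{λ,λ}`, the `(<λ)`-complete ideal generated by the
nowhere dense subsets of `^λλ`. -/
def InMIdeal (l : Ordinal) (A : Set (Ordinal → Ordinal)) : Prop :=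
  A ⊆ funSp l ∧ ∃ θ, θ < l ∧ ∃ B : Ordinal → Set (Ordinal → Ordinal),
    (∀ i, i < θ → IsNwd l (B i)) ∧ A ⊆ ⋃ i ∈ Iio θ, B i

/-- The covering number `cov(M^λ_{λ,λ})`. -/
def covM (l : Ordinal) : Cardinal.{1} :=
  sInf {c : Cardinal | ∃ S : Set (Set (Ordinal → Ordinal)),
    (∀ A ∈ S, InMIdeal l A) ∧ funSp l ⊆ ⋃₀ S ∧ #S = c}

-- ===== auxiliary material for stmt6 =====

private lemma sh_add_lt {κ : Cardinal} (hκ : ℵ₀ ≤ κ) {a b : Ordinal}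
    (ha : a < κ.ord) (hb : b < κ.ord) : a + b < κ.ord := by
  rw [Cardinal.lt_ord] at ha hb ⊢
  rw [Ordinal.card_add]
  exact Cardinal.add_lt_of_lt hκ ha hb

private lemma sh_nxt_spec {C : Set Ordinal} {l : Ordinal} (hC : IsClubIn C l)
    {β : Ordinal} (hβ : β < l) : nxt C β ∈ C ∧ β < nxt C β := by
  obtain ⟨x, hx, hβx⟩ := hC.2.2 β hβ
  have h := csInf_mem (⟨x, hx, hβx⟩ : (C ∩ Ioi β).Nonempty)
  exact ⟨h.1, h.2⟩

private lemma sh_sSup_club {C : Set Ordinal} {l : Ordinal} (hC : IsClubIn C l)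
    {α : Ordinal} (hα : α < l) (hne : (C ∩ Iic α).Nonempty) :
    sSup (C ∩ Iic α) ∈ C ∧ sSup (C ∩ Iic α) ≤ α := by
  have hbdd : BddAbove (C ∩ Iic α) := ⟨α, fun x hx => hx.2⟩
  have hδα : sSup (C ∩ Iic α) ≤ α := csSup_le hne fun b hb => hb.2
  refine ⟨?_, hδα⟩
  by_contra hmem
  have hlt : ∀ x ∈ C ∩ Iic α, x < sSup (C ∩ Iic α) := fun x hx =>
    lt_of_le_of_ne (le_csSup hbdd hx) (fun h => hmem (h ▸ hx.1))
  obtain ⟨x0, hx0⟩ := hne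
  have hδ0 : sSup (C ∩ Iic α) ≠ 0 := by
    intro h0
    have := hlt x0 hx0
    rw [h0] at this
    exact not_lt_of_ge zero_le this
  have hδl : sSup (C ∩ Iic α) < l := lt_of_le_of_lt hδα hα
  have hsup : sSup (C ∩ Iio (sSup (C ∩ Iic α))) = sSup (C ∩ Iic α) := by
    apply le_antisymm
    · exact csSup_le ⟨x0, hx0.1, hlt x0 hx0⟩ fun b hb => hb.2.le
    · have h2 : sSup (C ∩ Iic α) ≤ sSup (C ∩ Iio (sSup (C ∩ Iic α))) := by
        apply csSup_le ⟨x0, hx0⟩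
        intro b hb
        exact le_csSup ⟨sSup (C ∩ Iic α), fun y hy => hy.2.le⟩ ⟨hb.1, hlt b hb⟩
      exact h2
  exact hmem (hC.2.1 _ hδl hδ0 hsup)

private lemma sh_club_inter {κ : Cardinal.{u}} (hreg : κ.IsRegular) (hunc : ℵ₀ < κ)
    {ι : Type u} (hι : #ι < κ) (g : ι → Set Ordinal.{u})
    (hg : ∀ i, IsClubIn (g i) κ.ord) :
    IsClubIn (Iio κ.ord ∩ ⋂ i, g i) κ.ord := by
  have hlim : Order.IsSuccLimit (κ.ord) := Cardinal.isSuccLimit_ord hreg.aleph0_le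
  refine ⟨Set.inter_subset_left, ?_, ?_⟩
  · -- closed
    intro δ hδl hδ0 hsup
    have hTne : ((Iio κ.ord ∩ ⋂ i, g i) ∩ Iio δ).Nonempty := by
      rcases Set.eq_empty_or_nonempty ((Iio κ.ord ∩ ⋂ i, g i) ∩ Iio δ) with h | h
      · rw [h, csSup_empty] at hsup
        exact absurd hsup.symm (by simpa [Ordinal.bot_eq_zero] using hδ0)
      · exact h
    refine ⟨hδl, Set.mem_iInter.2 fun i => ?_⟩
    have hsubi : (Iio κ.ord ∩ ⋂ i, g i) ∩ Iio δ ⊆ g i ∩ Iio δ :=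
      fun x hx => ⟨Set.mem_iInter.1 hx.1.2 i, hx.2⟩
    have h1 : sSup (g i ∩ Iio δ) ≤ δ := csSup_le (hTne.mono hsubi) fun b hb => hb.2.le
    have h2 : δ ≤ sSup (g i ∩ Iio δ) := by
      have h2' : sSup ((Iio κ.ord ∩ ⋂ i, g i) ∩ Iio δ) ≤ sSup (g i ∩ Iio δ) :=
        csSup_le_csSup ⟨δ, fun y hy => hy.2.le⟩ hTne hsubi
      rwa [hsup] at h2'
    exact (hg i).2.1 δ hδl hδ0 (le_antisymm h1 h2)
  · -- unbounded
    intro α hα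
    have hql : ∀ β, β < κ.ord → (⨆ i, nxt (g i) β) < κ.ord := by
      intro β hβ
      exact Cardinal.iSup_lt_ord_of_isRegular hreg hι fun i =>
        (hg i).1 (sh_nxt_spec (hg i) hβ).1
    have hqge : ∀ β, β < κ.ord → ∀ i, nxt (g i) β ≤ ⨆ i, nxt (g i) β := by
      intro β hβ i
      exact le_ciSup ⟨κ.ord, by
        rintro x ⟨j, rfl⟩
        exact ((hg j).1 (sh_nxt_spec (hg j) hβ).1).le⟩ i
    set h : ℕ → Ordinal :=
      fun n => Nat.rec (α + 1) (fun _ β => max (⨆ i, nxt (g i) β) β + 1) n with hh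
    have hstep : ∀ n, h (n + 1) = max (⨆ i, nxt (g i) (h n)) (h n) + 1 := fun n => rfl
    have hhl : ∀ n, h n < κ.ord := by
      intro n
      induction n with
      | zero =>
        show α + 1 < κ.ord
        rw [Ordinal.add_one_eq_succ]
        exact hlim.succ_lt hα
      | succ n ih =>
        rw [hstep n, Ordinal.add_one_eq_succ]
        exact hlim.succ_lt (max_lt (hql _ ih) ih)
    have hbdd : BddAbove (Set.range h) := ⟨κ.ord, by rintro x ⟨n, rfl⟩; exact (hhl n).le⟩
    have hhδ : ∀ n, h n ≤ ⨆ n, h n := fun n => le_ciSup hbdd n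
    have hδl : (⨆ n, h n) < κ.ord :=
      Cardinal.iSup_lt_ord_lift_of_isRegular hreg
        (by rw [Cardinal.mk_nat, Cardinal.lift_aleph0]; exact hunc) hhl
    have hαδ : α < ⨆ n, h n := by
      have h0 : α < h 0 := by
        show α < α + 1
        rw [Ordinal.add_one_eq_succ]
        exact Order.lt_succ α
      exact h0.trans_le (hhδ 0)
    have hδ0 : (⨆ n, h n) ≠ 0 := by
      intro h0
      rw [h0] at hαδ
      exact not_lt_of_ge zero_le hαδ
    have key : ∀ (i : ι) (b : Ordinal), b < ⨆ n, h n →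
        ∃ x ∈ g i, b < x ∧ x < ⨆ n, h n := by
      intro i b hb
      obtain ⟨n, hn⟩ : ∃ n, b < h n := by
        by_contra hcon
        push_neg at hcon
        exact absurd (ciSup_le hcon) (not_le.2 hb)
      refine ⟨nxt (g i) (h n), (sh_nxt_spec (hg i) (hhl n)).1,
        hn.trans (sh_nxt_spec (hg i) (hhl n)).2, ?_⟩
      have h1 : nxt (g i) (h n) ≤ max (⨆ j, nxt (g j) (h n)) (h n) :=
        (hqge _ (hhl n) i).trans (le_max_left _ _)
      have h2 : max (⨆ j, nxt (g j) (h n)) (h n) < h (n + 1) := by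
        rw [hstep n, Ordinal.add_one_eq_succ]
        exact Order.lt_succ _
      exact (h1.trans_lt h2).trans_le (hhδ (n + 1))
    refine ⟨⨆ n, h n, ⟨hδl, Set.mem_iInter.2 fun i => ?_⟩, hαδ⟩
    have hne : (g i ∩ Iio (⨆ n, h n)).Nonempty := by
      obtain ⟨x, hx1, _, hx3⟩ := key i 0 (pos_iff_ne_zero.2 hδ0)
      exact ⟨x, hx1, hx3⟩
    refine (hg i).2.1 _ hδl hδ0 (le_antisymm (csSup_le hne fun b hb => hb.2.le) ?_)
    apply le_of_forall_lt
    intro c hc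
    obtain ⟨x, hx1, hx2, hx3⟩ := key i c hc
    exact hx2.trans_le (le_csSup ⟨⨆ n, h n, fun y hy => hy.2.le⟩ ⟨hx1, hx3⟩)

private lemma sh_finite {S : Set Ordinal} (φ : Ordinal → Ordinal)
    (h : ∀ ε ∈ S, ∀ ε' ∈ S, ε < ε' → φ ε' < φ ε) : S.Finite := by
  rw [← Set.not_infinite]
  intro hS
  set g : ℕ → Ordinal := fun n => Nat.rec (sInf S) (fun _ β => sInf (S ∩ Ioi β)) n with hg
  have hgstep : ∀ n, g (n + 1) = sInf (S ∩ Ioi (g n)) := fun n => rfl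
  have key : ∀ n, g n ∈ S ∧ (S ∩ Iic (g n)).Finite := by
    intro n
    induction n with
    | zero =>
      refine ⟨csInf_mem hS.nonempty, Set.Finite.subset (Set.finite_singleton (g 0)) ?_⟩
      intro x hx
      exact Set.mem_singleton_iff.2 (le_antisymm hx.2 (csInf_le' hx.1))
    | succ n ih =>
      have hne : (S ∩ Ioi (g n)).Nonempty := by
        rcases Set.eq_empty_or_nonempty (S ∩ Ioi (g n)) with he | he
        · exfalso
          apply hS
          apply ih.2.subset
          intro x hx
          refine ⟨hx, ?_⟩
          by_contra hgt
          simp only [Set.mem_Iic, not_le] at hgt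
          exact Set.eq_empty_iff_forall_notMem.1 he x ⟨hx, hgt⟩
        · exact he
      have hmem := csInf_mem hne
      rw [← hgstep n] at hmem
      refine ⟨hmem.1, ?_⟩
      apply (ih.2.union (Set.finite_singleton (g (n + 1)))).subset
      intro x hx
      rcases le_or_gt x (g n) with h' | h'
      · exact Or.inl ⟨hx.1, h'⟩
      · refine Or.inr (Set.mem_singleton_iff.2 (le_antisymm hx.2 ?_))
        rw [hgstep n]
        exact csInf_le' ⟨hx.1, h'⟩
  have hlt : ∀ n, g n < g (n + 1) := by
    intro n
    have hne : (S ∩ Ioi (g n)).Nonempty := by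
      rcases Set.eq_empty_or_nonempty (S ∩ Ioi (g n)) with he | he
      · exfalso
        apply hS
        apply (key n).2.subset
        intro x hx
        refine ⟨hx, ?_⟩
        by_contra hgt
        simp only [Set.mem_Iic, not_le] at hgt
        exact Set.eq_empty_iff_forall_notMem.1 he x ⟨hx, hgt⟩
      · exact he
    have := csInf_mem hne
    rw [← hgstep n] at this
    exact this.2
  have hdesc : ∀ n, φ (g (n + 1)) < φ (g n) := fun n =>
    h (g n) (key n).1 (g (n + 1)) (key (n + 1)).1 (hlt n)
  have hne : (Set.range fun n => φ (g n)).Nonempty := ⟨φ (g 0), 0, rfl⟩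
  obtain ⟨N, hN⟩ := csInf_mem hne
  have h1 : sInf (Set.range fun n => φ (g n)) ≤ φ (g (N + 1)) := csInf_le' ⟨N + 1, rfl⟩
  exact absurd (h1.trans_lt (hN ▸ hdesc N)) (lt_irrefl _)

/-- intersection of the previously chosen clubs together with `Iio l` -/
@[reducible] private def shCpP (l : Ordinal) (ε : Ordinal)
    (prev : ∀ i, i < ε → Set Ordinal) : Set Ordinal :=
  Iio l ∩ ⋂ i, ⋂ (hi : i < ε), prev i hi

open Classical in
/-- one step of the recursion choosing witnessing clubs for weak reasonability -/
private noncomputable def shStep (l : Ordinal) (D : Set (Set Ordinal)) (ε : Ordinal)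
    (prev : ∀ i, i < ε → Set Ordinal) : Set Ordinal :=
  if h : ∃ C, IsClubIn C l ∧
      (⋃ δ ∈ C, Ico δ (δ + nxt (shCpP l ε prev) δ)) ∉ D then
    h.choose ∩ shCpP l ε prev
  else Iio l

private noncomputable def shCs (l : Ordinal) (D : Set (Set Ordinal)) :
    Ordinal → Set Ordinal :=
  fun ε => Ordinal.lt_wf.fix (shStep l D) ε

@[reducible] private def shCp (l : Ordinal) (D : Set (Set Ordinal)) (ε : Ordinal) :
    Set Ordinal :=
  Iio l ∩ ⋂ i, ⋂ (_ : i < ε), shCs l D i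

private lemma shCs_fixeq (l : Ordinal) (D : Set (Set Ordinal)) (ε : Ordinal) :
    shCs l D ε = shStep l D ε (fun i _ => shCs l D i) :=
  WellFounded.fix_eq Ordinal.lt_wf (shStep l D) ε

private lemma shCp_subset {l : Ordinal} {D : Set (Set Ordinal)} {i ε : Ordinal}
    (hi : i < ε) : shCp l D ε ⊆ shCs l D i := by
  intro x hx
  exact Set.mem_iInter.1 (Set.mem_iInter.1 hx.2 i) hi

private lemma shCs_spec (l : Ordinal) (D : Set (Set Ordinal)) (ε : Ordinal)
    (h : ∃ C, IsClubIn C l ∧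
      (⋃ δ ∈ C, Ico δ (δ + nxt (shCp l D ε) δ)) ∉ D) :
    shCs l D ε = h.choose ∩ shCp l D ε := by
  rw [shCs_fixeq l D ε]
  unfold shStep
  split
  · next h' => rfl
  · next h' => exact absurd h h'


/-- Theorem 1.8: every weakly reasonable uniform ultrafilter on `λ` is regular:
there is a sequence `⟨A_ε : ε < λ⟩` of members of `D` such that every `α < λ`
belongs to only finitely many `A_ε`. -/
theorem stmt6 (κ : Cardinal) (hreg : κ.IsRegular) (hunc : ℵ₀ < κ)
    (D : Set (Set Ordinal)) (hD : IsUltrafilterOn κ.ord D)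
    (hU : IsUniformOn κ.ord D) (hwr : WeaklyReasonable κ.ord D) :
    ∃ A : Ordinal → Set Ordinal, (∀ ε, ε < κ.ord → A ε ∈ D) ∧
      ∀ α, α < κ.ord → Set.Finite {ε | ε < κ.ord ∧ α ∈ A ε} := by
  classical
  unfold IsUltrafilterOn IsUltraOn at hD
  obtain ⟨hsub, hZD, hem, hup, hin, hul⟩ := hD
  have hκ0 : ℵ₀ ≤ κ := hunc.le
  have hlim : Order.IsSuccLimit (κ.ord) := Cardinal.isSuccLimit_ord hκ0
  -- bounded sets are not in D
  have hsmall : ∀ b, b < κ.ord → Iio b ∉ D := by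
    intro b hb hmem
    have h1 := hU _ hmem
    rw [Ordinal.mk_Iio_ordinal, Ordinal.mk_Iio_ordinal] at h1
    have h2 := Cardinal.lift_inj.1 h1
    rw [Cardinal.card_ord] at h2
    exact absurd h2 (Cardinal.lt_ord.1 hb).ne
  have hcompl : ∀ A : Set Ordinal, A ⊆ Iio κ.ord → A ∉ D → Iio κ.ord \ A ∈ D :=
    fun A hA hnA => (hul A hA).resolve_left hnA
  have hunion : ∀ A B : Set Ordinal, A ⊆ Iio κ.ord → B ⊆ Iio κ.ord →
      A ∉ D → B ∉ D → A ∪ B ∉ D := by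
    intro A B hA hB hnA hnB hmem
    have h1 := hin _ _ (hcompl A hA hnA) (hcompl B hB hnB)
    have h2 := hin _ _ h1 hmem
    have h3 : (Iio κ.ord \ A) ∩ (Iio κ.ord \ B) ∩ (A ∪ B) = (∅ : Set Ordinal) := by
      ext x
      simp only [Set.mem_inter_iff, Set.mem_diff, Set.mem_union, Set.mem_empty_iff_false]
      tauto
    rw [h3] at h2
    exact hem h2
  -- the main induction on ε
  have main : ∀ ε, ε < κ.ord →
      IsClubIn (shCp κ.ord D ε) κ.ord ∧ IsClubIn (shCs κ.ord D ε) κ.ord ∧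
      shCs κ.ord D ε ⊆ shCp κ.ord D ε ∧
      (⋃ δ ∈ shCs κ.ord D ε, Ico δ (δ + nxt (shCp κ.ord D ε) δ)) ∉ D := by
    intro ε
    induction ε using Ordinal.induction with
    | h ε IH =>
    intro hεl
    have hCp : IsClubIn (shCp κ.ord D ε) κ.ord := by
      have hι : #(ε.ToType) < κ := by
        rw [Cardinal.mk_toType]
        exact Cardinal.lt_ord.1 hεl
      have hclubs : ∀ x : ε.ToType,
          IsClubIn (shCs κ.ord D (((Ordinal.ToType.mk (o := ε)).symm x).1)) κ.ord := by
        intro x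
        have hx : (((Ordinal.ToType.mk (o := ε)).symm x) : Ordinal) < ε :=
          ((Ordinal.ToType.mk (o := ε)).symm x).2
        exact (IH _ hx (hx.trans hεl)).2.1
      have h2 := sh_club_inter hreg hunc hι _ hclubs
      have h3 : (Iio κ.ord ∩ ⋂ x : ε.ToType,
          shCs κ.ord D (((Ordinal.ToType.mk (o := ε)).symm x).1)) = shCp κ.ord D ε := by
        ext z
        simp only [shCp, Set.mem_inter_iff, Set.mem_iInter]
        constructor
        · rintro ⟨hz1, hz2⟩
          refine ⟨hz1, fun i hi => ?_⟩
          have := hz2 (Ordinal.ToType.mk (o := ε) ⟨i, hi⟩)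
          rwa [OrderIso.symm_apply_apply] at this
        · rintro ⟨hz1, hz2⟩
          exact ⟨hz1, fun x => hz2 _ ((Ordinal.ToType.mk (o := ε)).symm x).2⟩
      rwa [h3] at h2
    have hfF : (fun δ => nxt (shCp κ.ord D ε) δ) ∈ Flam κ.ord := by
      refine ⟨fun a ha => hCp.1 (sh_nxt_spec hCp ha).1, fun a b hab hb => ?_,
        fun γ hγ => ⟨γ, hγ, (sh_nxt_spec hCp hγ).2.le⟩⟩
      have hne : (shCp κ.ord D ε ∩ Ioi b).Nonempty := by
        obtain ⟨x, hx, hbx⟩ := hCp.2.2 b hb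
        exact ⟨x, hx, hbx⟩
      exact csInf_le_csInf (OrderBot.bddBelow _) hne
        fun x hx => ⟨hx.1, lt_of_le_of_lt hab hx.2⟩
    have hex : ∃ C, IsClubIn C κ.ord ∧
        (⋃ δ ∈ C, Ico δ (δ + nxt (shCp κ.ord D ε) δ)) ∉ D := hwr _ hfF
    have hCs_eq : shCs κ.ord D ε = hex.choose ∩ shCp κ.ord D ε := shCs_spec κ.ord D ε hex
    obtain ⟨hCc, hCU⟩ := hex.choose_spec
    have hCsSub : shCs κ.ord D ε ⊆ shCp κ.ord D ε := by
      rw [hCs_eq]; exact Set.inter_subset_right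
    have hCsclub : IsClubIn (shCs κ.ord D ε) κ.ord := by
      have hι : #(ULift Bool) < κ := lt_trans (Cardinal.lt_aleph0_of_finite _) hunc
      have h2 := sh_club_inter hreg hunc hι
        (fun b : ULift Bool => Bool.rec (motive := fun _ => Set Ordinal)
          (shCp κ.ord D ε) hex.choose b.down)
        (fun b => by
          obtain ⟨b⟩ := b
          cases b with
          | false => exact hCp
          | true => exact hCc)
      have h3 : (Iio κ.ord ∩ ⋂ b : ULift Bool, Bool.rec (motive := fun _ => Set Ordinal)
          (shCp κ.ord D ε) hex.choose b.down) = hex.choose ∩ shCp κ.ord D ε := by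
        ext z
        constructor
        · rintro ⟨hz0, hz⟩
          exact ⟨Set.mem_iInter.1 hz ⟨true⟩, Set.mem_iInter.1 hz ⟨false⟩⟩
        · rintro ⟨h1, h2'⟩
          refine ⟨hCp.1 h2', Set.mem_iInter.2 ?_⟩
          intro b
          obtain ⟨b⟩ := b
          cases b with
          | false => exact h2'
          | true => exact h1
      rw [h3] at h2
      rw [hCs_eq]
      exact h2
    refine ⟨hCp, hCsclub, hCsSub, ?_⟩
    intro hUD
    apply hCU
    refine hup _ _ hUD ?_ ?_
    · intro x hx
      rw [Set.mem_iUnion₂] at hx ⊢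
      obtain ⟨δ, hδ, hxδ⟩ := hx
      rw [hCs_eq] at hδ
      exact ⟨δ, hδ.1, hxδ⟩
    · intro x hx
      rw [Set.mem_iUnion₂] at hx
      obtain ⟨δ, hδ, hxδ⟩ := hx
      have hδl : δ < κ.ord := hCc.1 hδ
      exact hxδ.2.trans_le
        (sh_add_lt hκ0 hδl (hCp.1 (sh_nxt_spec hCp hδl).1)).le
  -- the regularizing family
  refine ⟨fun ε => Iio κ.ord \
      ((⋃ δ ∈ shCs κ.ord D ε, Ico δ (δ + nxt (shCp κ.ord D ε) δ)) ∪
        Iio (sInf (shCs κ.ord D ε) + 1)), ?_, ?_⟩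
  · intro ε hε
    obtain ⟨hCp, hCsclub, hCsSub, hUn⟩ := main ε hε
    have hζmem : sInf (shCs κ.ord D ε) ∈ shCs κ.ord D ε := by
      apply csInf_mem
      obtain ⟨x, hx, _⟩ := hCsclub.2.2 0 hlim.pos
      exact ⟨x, hx⟩
    have hζl : sInf (shCs κ.ord D ε) + 1 < κ.ord := by
      rw [Ordinal.add_one_eq_succ]
      exact hlim.succ_lt (hCsclub.1 hζmem)
    have hUsub : (⋃ δ ∈ shCs κ.ord D ε, Ico δ (δ + nxt (shCp κ.ord D ε) δ)) ⊆
        Iio κ.ord := by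
      intro x hx
      rw [Set.mem_iUnion₂] at hx
      obtain ⟨δ, hδ, hxδ⟩ := hx
      have hδl : δ < κ.ord := hCsclub.1 hδ
      exact hxδ.2.trans (sh_add_lt hκ0 hδl (hCp.1 (sh_nxt_spec hCp hδl).1))
    exact hcompl _ (Set.union_subset hUsub (fun x hx => lt_trans hx hζl))
      (hunion _ _ hUsub (fun x hx => lt_trans hx hζl) hUn (hsmall _ hζl))
  · intro α hα
    apply sh_finite (fun ε => sSup (shCs κ.ord D ε ∩ Iic α))
    rintro ε ⟨hεl, hεA⟩ ε' ⟨hε'l, hε'A⟩ hlt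
    obtain ⟨hCp, hCsclub, hCsSub, hUn⟩ := main ε hεl
    obtain ⟨hCp', hCsclub', hCsSub', hUn'⟩ := main ε' hε'l
    have hεU : α ∉ (⋃ δ ∈ shCs κ.ord D ε, Ico δ (δ + nxt (shCp κ.ord D ε) δ)) :=
      fun h => hεA.2 (Set.mem_union_left _ h)
    have hεζ : sInf (shCs κ.ord D ε) ≤ α := by
      have h1 : sInf (shCs κ.ord D ε) + 1 ≤ α :=
        not_lt.1 (fun h => hεA.2 (Set.mem_union_right _ h))
      refine le_trans ?_ h1
      rw [Ordinal.add_one_eq_succ]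
      exact Order.le_succ _
    have hε'U : α ∉ (⋃ δ ∈ shCs κ.ord D ε', Ico δ (δ + nxt (shCp κ.ord D ε') δ)) :=
      fun h => hε'A.2 (Set.mem_union_left _ h)
    have hε'ζ : sInf (shCs κ.ord D ε') ≤ α := by
      have h1 : sInf (shCs κ.ord D ε') + 1 ≤ α :=
        not_lt.1 (fun h => hε'A.2 (Set.mem_union_right _ h))
      refine le_trans ?_ h1
      rw [Ordinal.add_one_eq_succ]
      exact Order.le_succ _
    have hζmemε : sInf (shCs κ.ord D ε) ∈ shCs κ.ord D ε := by
      apply csInf_mem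
      obtain ⟨x, hx, _⟩ := hCsclub.2.2 0 hlim.pos
      exact ⟨x, hx⟩
    have hζmemε' : sInf (shCs κ.ord D ε') ∈ shCs κ.ord D ε' := by
      apply csInf_mem
      obtain ⟨x, hx, _⟩ := hCsclub'.2.2 0 hlim.pos
      exact ⟨x, hx⟩
    have hneε : (shCs κ.ord D ε ∩ Iic α).Nonempty := ⟨_, hζmemε, hεζ⟩
    have hneε' : (shCs κ.ord D ε' ∩ Iic α).Nonempty := ⟨_, hζmemε', hε'ζ⟩
    obtain ⟨hφεmem, hφεle⟩ := sh_sSup_club hCsclub hα hneε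
    obtain ⟨hφε'mem, hφε'le⟩ := sh_sSup_club hCsclub' hα hneε'
    have hchain : shCs κ.ord D ε' ⊆ shCs κ.ord D ε :=
      fun x hx => shCp_subset hlt (hCsSub' hx)
    have hle : sSup (shCs κ.ord D ε' ∩ Iic α) ≤ sSup (shCs κ.ord D ε ∩ Iic α) :=
      le_csSup ⟨α, fun x hx => hx.2⟩ ⟨hchain hφε'mem, hφε'le⟩
    refine lt_of_le_of_ne hle ?_
    intro heq
    have hδl : sSup (shCs κ.ord D ε' ∩ Iic α) < κ.ord := lt_of_le_of_lt hφε'le hα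
    have h1 : sSup (shCs κ.ord D ε' ∩ Iic α) +
        nxt (shCp κ.ord D ε') (sSup (shCs κ.ord D ε' ∩ Iic α)) ≤ α := by
      by_contra hcon
      push_neg at hcon
      exact hε'U (Set.mem_iUnion₂.2 ⟨_, hφε'mem, hφε'le, hcon⟩)
    have hne2 : (shCp κ.ord D ε' ∩ Ioi (sSup (shCs κ.ord D ε' ∩ Iic α))).Nonempty := by
      obtain ⟨x, hx, hx2⟩ := hCp'.2.2 _ hδl
      exact ⟨x, hx, hx2⟩
    have h3 : nxt (shCs κ.ord D ε) (sSup (shCs κ.ord D ε' ∩ Iic α)) ≤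
        nxt (shCp κ.ord D ε') (sSup (shCs κ.ord D ε' ∩ Iic α)) :=
      csInf_le_csInf (OrderBot.bddBelow _) hne2
        (fun x hx => ⟨shCp_subset hlt hx.1, hx.2⟩)
    have h4 := sh_nxt_spec hCsclub hδl
    have h5 : nxt (shCs κ.ord D ε) (sSup (shCs κ.ord D ε' ∩ Iic α)) ≤ α :=
      le_trans h3 (le_trans le_add_self h1)
    have h6 : nxt (shCs κ.ord D ε) (sSup (shCs κ.ord D ε' ∩ Iic α)) ≤
        sSup (shCs κ.ord D ε ∩ Iic α) :=
      le_csSup ⟨α, fun x hx => hx.2⟩ ⟨h4.1, h5⟩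
    rw [← heq] at h6
    exact absurd h4.2 (not_lt.2 h6)


end Sh830

end
end

section
/- Let λ be a regular uncountable cardinal. The forcing notion Q¹_λ is (<λ)-complete: if δ < λ is a limit ordinal and ⟨p_i : i < δ⟩ is a sequence of conditions in Q¹_λ which is increasing with respect to ≤_{Q¹_λ}, then there is a condition p ∈ Q¹_λ with p_i ≤_{Q¹_λ} p for all i < δ. -/
open Set Ordinal Cardinal

noncomputable section

namespace Sh830

section Aux
universe u

lemma nxt_spec {C : Set Ordinal} {l δ : Ordinal} (hC : IsClubIn C l) (hδ : δ < l) :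
    nxt C δ ∈ C ∧ δ < nxt C δ := by
  obtain ⟨β, hβC, hβ⟩ := hC.2.2 δ hδ
  have h := csInf_mem (⟨β, hβC, hβ⟩ : (C ∩ Ioi δ).Nonempty)
  exact ⟨h.1, h.2⟩

lemma nxt_le {C : Set Ordinal} {δ ε : Ordinal} (hε : ε ∈ C) (h : δ < ε) : nxt C δ ≤ ε :=
  csInf_le' ⟨hε, h⟩

lemma exists_ultra (l δ : Ordinal) (p : Ordinal → Q1 l) (h0 : 0 < δ)
    (hinc : ∀ i j, i < j → j < δ → Q1le l (p i) (p j))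
    {δ' ε : Ordinal}
    (hδ' : ∀ i, i < δ → δ' ∈ (p i).C) (hε : ∀ i, i < δ → ε ∈ (p i).C) (hlt : δ' < ε) :
    ∃ D, IsUltraOn (Ico δ' ε) D ∧
      ∀ i, i < δ → ∀ A ∈ D, ∃ ζ ∈ (p i).C ∩ Ico δ' ε,
        A ∩ Ico ζ (nxt (p i).C ζ) ∈ (p i).d ζ := by
  set Z : Set Ordinal := Ico δ' ε with hZ
  -- the interval of p i at ζ
  set Zi : Ordinal → Ordinal → Set Ordinal := fun i ζ => Ico ζ (nxt (p i).C ζ) with hZi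
  have hZisub : ∀ i, i < δ → ∀ ζ ∈ (p i).C ∩ Ico δ' ε, Zi i ζ ⊆ Z := by
    intro i hi ζ hζ
    exact Ico_subset_Ico hζ.2.1 (nxt_le (hε i hi) hζ.2.2)
  -- the filters J i
  set J : Ordinal → Set (Set Ordinal) := fun i =>
    {B | B ⊆ Z ∧ ∀ ζ ∈ (p i).C ∩ Ico δ' ε, B ∩ Zi i ζ ∈ (p i).d ζ} with hJ
  have hZJ : ∀ i, i < δ → Z ∈ J i := by
    intro i hi
    refine ⟨subset_rfl, fun ζ hζ => ?_⟩
    rw [Set.inter_eq_self_of_subset_right (hZisub i hi ζ hζ)]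
    exact ((p i).ultra ζ hζ.1).2.1
  have hJne : ∀ i, i < δ → ∅ ∉ J i := by
    intro i hi h
    have hδ'mem : δ' ∈ (p i).C ∩ Ico δ' ε := ⟨hδ' i hi, le_refl _, hlt⟩
    have := h.2 δ' hδ'mem
    rw [Set.empty_inter] at this
    exact ((p i).ultra δ' (hδ' i hi)).2.2.1 this
  have hJinter : ∀ i, i < δ → ∀ B1 ∈ J i, ∀ B2 ∈ J i, B1 ∩ B2 ∈ J i := by
    intro i hi B1 h1 B2 h2
    refine ⟨fun x hx => h1.1 hx.1, fun ζ hζ => ?_⟩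
    have := ((p i).ultra ζ hζ.1).2.2.2.2.1 _ _ (h1.2 ζ hζ) (h2.2 ζ hζ)
    have heq : B1 ∩ Zi i ζ ∩ (B2 ∩ Zi i ζ) = B1 ∩ B2 ∩ Zi i ζ := by
      ext x; simp only [Set.mem_inter_iff]; tauto
    rwa [heq] at this
  have hJmono : ∀ i j, i ≤ j → j < δ → J i ⊆ J j := by
    intro i j hij hj
    rcases eq_or_lt_of_le hij with rfl | hij
    · exact subset_rfl
    intro B hB
    refine ⟨hB.1, fun ζ' hζ' => ?_⟩
    refine Classical.byContradiction fun hno => ?_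
    have huj := (p j).ultra ζ' hζ'.1
    have hcompl : Zi j ζ' \ B ∈ (p j).d ζ' := by
      rcases huj.2.2.2.2.2 (B ∩ Zi j ζ') Set.inter_subset_right with h | h
      · exact absurd h hno
      · rwa [Set.diff_inter_self_eq_diff] at h
    obtain ⟨ζ, hζmem, hζd⟩ := (hinc i j hij hj).2.2.2 ζ' hζ'.1 _ hcompl
    have hζZ : ζ ∈ (p i).C ∩ Ico δ' ε :=
      ⟨hζmem.1, le_trans hζ'.2.1 hζmem.2.1,
        lt_of_lt_of_le hζmem.2.2 (nxt_le (hε j hj) hζ'.2.2)⟩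
    have hBd := hB.2 ζ hζZ
    have hui := (p i).ultra ζ hζZ.1
    have := hui.2.2.2.2.1 _ _ hζd hBd
    have heq : Zi j ζ' \ B ∩ Zi i ζ ∩ (B ∩ Zi i ζ) = ∅ := by
      ext x; simp only [Set.mem_inter_iff, Set.mem_diff, Set.mem_empty_iff_false]; tauto
    rw [heq] at this
    exact hui.2.2.1 this
  -- build the filter
  let F : Filter Ordinal :=
    { sets := {A | ∃ B, (∃ i, i < δ ∧ B ∈ J i) ∧ B ⊆ A}
      univ_sets := ⟨Z, ⟨0, h0, hZJ 0 h0⟩, Set.subset_univ _⟩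
      sets_of_superset := by rintro A A' ⟨B, hB, hBA⟩ hAA'; exact ⟨B, hB, hBA.trans hAA'⟩
      inter_sets := by
        rintro A1 A2 ⟨B1, ⟨i1, hi1, hB1⟩, hs1⟩ ⟨B2, ⟨i2, hi2, hB2⟩, hs2⟩
        rcases le_total i1 i2 with h | h
        · exact ⟨B1 ∩ B2, ⟨i2, hi2, hJinter i2 hi2 _ (hJmono i1 i2 h hi2 hB1) _ hB2⟩,
            fun x hx => ⟨hs1 hx.1, hs2 hx.2⟩⟩
        · exact ⟨B1 ∩ B2, ⟨i1, hi1, hJinter i1 hi1 _ hB1 _ (hJmono i2 i1 h hi1 hB2)⟩,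
            fun x hx => ⟨hs1 hx.1, hs2 hx.2⟩⟩ }
  have hFsets : ∀ i, i < δ → ∀ B ∈ J i, B ∈ F := by
    intro i hi B hB
    exact ⟨B, ⟨i, hi, hB⟩, subset_rfl⟩
  have hFne : F.NeBot := by
    rw [Filter.neBot_iff]
    intro hbot
    have : (∅ : Set Ordinal) ∈ F := by rw [hbot]; exact Filter.mem_bot
    obtain ⟨B, ⟨i, hi, hB⟩, hBs⟩ := this
    rw [Set.subset_empty_iff] at hBs
    exact hJne i hi (hBs ▸ hB)
  obtain ⟨u, hu⟩ := @Ultrafilter.exists_le _ F hFne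
  have huF : ∀ A ∈ F, A ∈ u := fun A hA => hu hA
  have hJu : ∀ i, i < δ → ∀ B ∈ J i, B ∈ u := fun i hi B hB => huF B (hFsets i hi B hB)
  have hZu : Z ∈ u := hJu 0 h0 Z (hZJ 0 h0)
  refine ⟨{A | A ⊆ Z ∧ A ∈ u}, ⟨fun A hA => hA.1, ⟨subset_rfl, hZu⟩, ?_, ?_, ?_, ?_⟩, ?_⟩
  · rintro ⟨-, h⟩
    exact Filter.empty_notMem (u : Filter Ordinal) h
  · intro A B hA hAB hBZ
    exact ⟨hBZ, Filter.mem_of_superset hA.2 hAB⟩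
  · intro A B hA hB
    exact ⟨fun x hx => hA.1 hx.1, Filter.inter_mem hA.2 hB.2⟩
  · intro A hAZ
    by_cases h : A ∈ u
    · exact Or.inl ⟨hAZ, h⟩
    · refine Or.inr ⟨Set.diff_subset, ?_⟩
      rw [Set.diff_eq]
      exact Filter.inter_mem hZu (Ultrafilter.compl_mem_iff_notMem.2 h)
  · intro i hi A hA
    by_contra hno
    push_neg at hno
    have hBJ : Z \ A ∈ J i := by
      refine ⟨Set.diff_subset, fun ζ hζ => ?_⟩
      have hui := (p i).ultra ζ hζ.1
      have hsmall : A ∩ Zi i ζ ∉ (p i).d ζ := hno ζ hζ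
      have hcompl : Zi i ζ \ A ∈ (p i).d ζ := by
        rcases hui.2.2.2.2.2 (A ∩ Zi i ζ) Set.inter_subset_right with h | h
        · exact absurd h hsmall
        · rwa [Set.diff_inter_self_eq_diff] at h
      have heq : (Z \ A) ∩ Zi i ζ = Zi i ζ \ A := by
        have hsub := hZisub i hi ζ hζ
        ext x
        simp only [Set.mem_inter_iff, Set.mem_diff]
        exact ⟨fun h => ⟨h.2, h.1.2⟩, fun h => ⟨⟨hsub h.1, h.2⟩, h.1⟩⟩
      rwa [heq]
    have : (Z \ A) ∩ A ∈ u := Filter.inter_mem (hJu i hi _ hBJ) hA.2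
    rw [Set.diff_inter_self] at this
    exact Filter.empty_notMem (u : Filter Ordinal) this


lemma sSup_image_lt {κ : Cardinal} (hreg : κ.IsRegular) {δ : Ordinal} (hδ : δ < κ.ord)
    {g : Ordinal → Ordinal} (hg : ∀ x, x < δ → g x < κ.ord) :
    sSup (g '' Iio δ) < κ.ord := by
  have hrange : g '' Iio δ
      = Set.range (fun x : δ.ToType => g (((Ordinal.ToType.mk (o := δ))).symm x).1) := by
    ext y
    constructor
    · rintro ⟨x, hx, rfl⟩
      exact ⟨(Ordinal.ToType.mk (o := δ)) ⟨x, hx⟩, by simp⟩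
    · rintro ⟨t, rfl⟩
      exact ⟨_, (((Ordinal.ToType.mk (o := δ))).symm t).2, rfl⟩
  rw [hrange, ← iSup]
  exact Cardinal.iSup_lt_ord_of_isRegular hreg
    (by rwa [mk_toType, ← Cardinal.lt_ord])
    (fun t => hg _ (((Ordinal.ToType.mk (o := δ))).symm t).2)

lemma iSup_nat_lt {κ : Cardinal} (hreg : κ.IsRegular) (hunc : ℵ₀ < κ)
    {a : ℕ → Ordinal} (ha : ∀ n, a n < κ.ord) : (⨆ n, a n) < κ.ord :=
  Cardinal.iSup_lt_ord_lift_of_isRegular hreg (by simpa using hunc) ha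

end Aux

/-- Proposition 1.2(3): `Q¹_λ` is `(<λ)`-complete. -/
theorem stmt8 (κ : Cardinal) (hreg : κ.IsRegular) (hunc : ℵ₀ < κ)
    (δ : Ordinal) (hδ : δ < κ.ord) (hlim : Order.IsSuccLimit δ)
    (p : Ordinal → Q1 κ.ord)
    (hinc : ∀ i j, i < j → j < δ → Q1le κ.ord (p i) (p j)) :
    ∃ q : Q1 κ.ord, ∀ i, i < δ → Q1le κ.ord (p i) q := by
  have h0 : (0:Ordinal) < δ := hlim.pos
  have hCmono : ∀ i j, i ≤ j → j < δ → (p j).C ⊆ (p i).C := by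
    intro i j hij hj
    rcases eq_or_lt_of_le hij with rfl | h
    · exact subset_rfl
    · exact (hinc i j h hj).2.2.1
  set Cq : Set Ordinal := {x | ∀ i, i < δ → x ∈ (p i).C} with hCq
  have hCsub : Cq ⊆ Iio κ.ord := fun x hx => (p 0).club.1 (hx 0 h0)
  have hCclosed : ∀ x, x < κ.ord → x ≠ 0 → sSup (Cq ∩ Iio x) = x → x ∈ Cq := by
    intro x hx hx0 hsup i hi
    have hne : (Cq ∩ Iio x).Nonempty := by
      by_contra h
      rw [Set.not_nonempty_iff_eq_empty] at h
      rw [h, csSup_empty] at hsup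
      exact hx0 (by simpa using hsup.symm)
    apply (p i).club.2.1 x hx hx0
    have hsub : Cq ∩ Iio x ⊆ (p i).C ∩ Iio x := fun y hy => ⟨hy.1 i hi, hy.2⟩
    have hb : BddAbove ((p i).C ∩ Iio x) := ⟨x, fun y hy => le_of_lt hy.2⟩
    have h1 : sSup ((p i).C ∩ Iio x) ≤ x :=
      csSup_le (hne.mono hsub) (fun y hy => le_of_lt hy.2)
    have h2 : x ≤ sSup ((p i).C ∩ Iio x) := by
      have := csSup_le_csSup hb hne hsub
      rwa [hsup] at this
    exact le_antisymm h1 h2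
  have hnxt : ∀ i, i < δ → ∀ x, x < κ.ord → nxt (p i).C x ∈ (p i).C ∧ x < nxt (p i).C x :=
    fun i hi x hx => nxt_spec (p i).club hx
  set gnext : Ordinal → Ordinal := fun x => sSup ((fun i => nxt (p i).C x) '' Iio δ) with hgnext
  have hg : ∀ x, x < κ.ord →
      (∀ i, i < δ → nxt (p i).C x ≤ gnext x) ∧ x < gnext x ∧ gnext x < κ.ord := by
    intro x hx
    have hbdd : BddAbove ((fun i => nxt (p i).C x) '' Iio δ) := by
      refine ⟨κ.ord, ?_⟩
      rintro y ⟨i, hi, rfl⟩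
      exact le_of_lt ((p i).club.1 (hnxt i hi x hx).1)
    have hle : ∀ i, i < δ → nxt (p i).C x ≤ gnext x := fun i hi => le_csSup hbdd ⟨i, hi, rfl⟩
    refine ⟨hle, lt_of_lt_of_le (hnxt 0 h0 x hx).2 (hle 0 h0), ?_⟩
    exact sSup_image_lt hreg hδ (fun i hi => (p i).club.1 (hnxt i hi x hx).1)
  have hCunbd : ∀ α, α < κ.ord → ∃ β ∈ Cq, α < β := by
    intro α hα
    set a : ℕ → Ordinal := fun n => Nat.rec α (fun _ y => gnext y) n with ha
    have ha0 : a 0 = α := rfl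
    have haS : ∀ n, a (n+1) = gnext (a n) := fun n => rfl
    have hal : ∀ n, a n < κ.ord := by
      intro n
      induction n with
      | zero => exact hα
      | succ n ih => rw [haS]; exact (hg _ ih).2.2
    have hamono : ∀ n, a n < a (n+1) := fun n => (hg _ (hal n)).2.1
    set β := ⨆ n, a n with hβ
    have hbddr : BddAbove (Set.range a) := ⟨κ.ord, by rintro y ⟨n, rfl⟩; exact le_of_lt (hal n)⟩
    have haleβ : ∀ n, a n ≤ β := fun n => le_ciSup hbddr n
    have hβl : β < κ.ord := iSup_nat_lt hreg hunc hal
    have hαβ : α < β := lt_of_lt_of_le (ha0 ▸ hamono 0) (haleβ 1)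
    have hβ0 : β ≠ 0 := pos_iff_ne_zero.1 (lt_of_le_of_lt (zero_le (a := α)) hαβ)
    refine ⟨β, ?_, hαβ⟩
    intro i hi
    apply (p i).club.2.1 β hβl hβ0
    have hmem : ∀ n, nxt (p i).C (a n) ∈ (p i).C ∩ Iio β := by
      intro n
      have h1 : nxt (p i).C (a n) ≤ a (n+1) := (haS n) ▸ (hg (a n) (hal n)).1 i hi
      exact ⟨(hnxt i hi (a n) (hal n)).1,
        lt_of_le_of_lt h1 (lt_of_lt_of_le (hamono (n+1)) (haleβ (n+2)))⟩
    have hbdd2 : BddAbove ((p i).C ∩ Iio β) := ⟨β, fun y hy => le_of_lt hy.2⟩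
    have hne2 : ((p i).C ∩ Iio β).Nonempty := ⟨_, hmem 0⟩
    apply le_antisymm
    · exact csSup_le hne2 (fun y hy => le_of_lt hy.2)
    · exact ciSup_le (fun n =>
        le_trans (le_of_lt (hnxt i hi (a n) (hal n)).2) (le_csSup hbdd2 (hmem n)))
  have hCclub : IsClubIn Cq κ.ord := ⟨hCsub, hCclosed, hCunbd⟩
  have hγbdd : BddAbove ((fun i => (p i).γ) '' Iio δ) :=
    ⟨κ.ord, by rintro y ⟨i, hi, rfl⟩; exact le_of_lt (p i).γ_lt⟩
  set γq := sSup ((fun i => (p i).γ) '' Iio δ) with hγq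
  have hγl : γq < κ.ord := sSup_image_lt hreg hδ (fun i _ => (p i).γ_lt)
  have hγle : ∀ i, i < δ → (p i).γ ≤ γq := fun i hi => le_csSup hγbdd ⟨i, hi, rfl⟩
  have hex : ∀ δ', δ' ∈ Cq → ∃ D, IsUltraOn (Ico δ' (nxt Cq δ')) D ∧
      ∀ i, i < δ → ∀ A ∈ D, ∃ ζ ∈ (p i).C ∩ Ico δ' (nxt Cq δ'),
        A ∩ Ico ζ (nxt (p i).C ζ) ∈ (p i).d ζ := by
    intro δ' hδ'
    have hδ'l : δ' < κ.ord := hCsub hδ'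
    obtain ⟨hεC, hεlt⟩ := nxt_spec hCclub hδ'l
    exact exists_ultra κ.ord δ p h0 hinc (fun i hi => hδ' i hi) (fun i hi => hεC i hi) hεlt
  refine ⟨⟨γq, Cq, fun δ' => @dite _ (δ' ∈ Cq) (Classical.dec _) (fun h => (hex δ' h).choose) (fun _ => ∅), hγl, hCclub,
    fun δ' hδ' => (p 0).lim δ' (hδ' 0 h0), ?_⟩, ?_⟩
  · intro δ' hδ'
    simp only [dif_pos hδ']
    exact (hex δ' hδ').choose_spec.1
  · intro i hi
    refine ⟨hγle i hi, ?_, fun x hx => hx i hi, ?_⟩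
    · intro x hx j hj
      rcases le_or_gt j i with h | h
      · exact hCmono j i h hi hx.1
      · exact (hinc i j h hj).2.1 hx
    · intro δ' hδ' A hA
      simp only [dif_pos hδ'] at hA
      exact (hex δ' hδ').choose_spec.2 i hi A hA

end Sh830

end
end

section
/- Let λ be a regular uncountable cardinal. For every condition p ∈ Q¹_λ and every set A ⊆ λ there is a condition q ∈ Q¹_λ with p ≤_{Q¹_λ} q such that either (∀δ ∈ C^q \ γ^p)(A ∩ Z^q_δ ∈ d^q_δ) or (∀δ ∈ C^q \ γ^p)(A ∩ Z^q_δ ∉ d^q_δ). -/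
open Set Ordinal Cardinal

noncomputable section

namespace Sh830

-- auxiliary lemmas to be inserted before stmt9

-- auxiliary lemmas to be inserted before stmt9

-- auxiliary lemmas to be inserted before stmt9

-- auxiliary lemmas to be inserted before stmt9

lemma isUltraOn_ext {Z W : Set Ordinal} {d : Set (Set Ordinal)}
    (h : IsUltraOn Z d) (hZW : Z ⊆ W) :
    IsUltraOn W {B | B ⊆ W ∧ B ∩ Z ∈ d} := by
  obtain ⟨h1, h2, h3, h4, h5, h6⟩ := h
  refine ⟨fun B hB => hB.1,
    ⟨Subset.rfl, by rwa [inter_eq_self_of_subset_right hZW]⟩,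
    fun hB => h3 (by simpa using hB.2), ?_, ?_, ?_⟩
  · rintro B B' ⟨hBW, hBZ⟩ hBB' hB'W
    exact ⟨hB'W, h4 _ _ hBZ (inter_subset_inter_left _ hBB') inter_subset_right⟩
  · rintro B B' ⟨hBW, hBZ⟩ ⟨hB'W, hB'Z⟩
    refine ⟨fun x hx => hBW hx.1, ?_⟩
    have hEq : B ∩ B' ∩ Z = (B ∩ Z) ∩ (B' ∩ Z) := by
      ext x; simp only [mem_inter_iff]; tauto
    rw [hEq]; exact h5 _ _ hBZ hB'Z
  · intro B hBW
    rcases h6 (B ∩ Z) inter_subset_right with hpos | hneg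
    · exact Or.inl ⟨hBW, hpos⟩
    · refine Or.inr ⟨diff_subset, ?_⟩
      have hEq : (W \ B) ∩ Z = Z \ (B ∩ Z) := by
        ext x
        simp only [mem_inter_iff, mem_diff]
        constructor
        · rintro ⟨⟨hW, hB⟩, hZ⟩; exact ⟨hZ, fun h => hB h.1⟩
        · rintro ⟨hZ, hB⟩; exact ⟨⟨hZW hZ, fun hb => hB ⟨hb, hZ⟩⟩, hZ⟩
      rw [hEq]; exact hneg

lemma exists_decided (l : Ordinal)
    (hcof : ∀ f : ℕ → Ordinal, (∀ n, f n < l) → (⨆ n, f n) < l)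
    (p : Q1 l) (T : Set Ordinal) (hTC : T ⊆ p.C)
    (hTu : ∀ α, α < l → ∃ ζ ∈ T, α < ζ) :
    ∃ q : Q1 l, Q1le l p q ∧ ∀ δ ∈ q.C, p.γ ≤ δ →
      ∃ ζ ∈ T, Ico ζ (nxt p.C ζ) ⊆ Ico δ (nxt q.C δ) ∧
        ∀ B, B ∈ q.d δ ↔ B ⊆ Ico δ (nxt q.C δ) ∧ B ∩ Ico ζ (nxt p.C ζ) ∈ p.d ζ := by
  obtain ⟨hCsub, hCcl, hCub⟩ := p.club
  have hTlt : ∀ ζ ∈ T, ζ < l := fun ζ h => hCsub (hTC h)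
  -- accumulation points of T
  set Acc : Set Ordinal := {δ | δ < l ∧ δ ≠ 0 ∧ sSup (T ∩ Iio δ) = δ} with hAcc
  have accUnb : ∀ α, α < l → ∃ δ ∈ Acc, α < δ := by
    intro α hα
    set g : Ordinal → Ordinal := fun x => sInf (T ∩ Ioi x) with hg
    have hgm : ∀ x, x < l → g x ∈ T ∧ x < g x := by
      intro x hx
      obtain ⟨ζ, hζT, hζ⟩ := hTu x hx
      have hne : (T ∩ Ioi x).Nonempty := ⟨ζ, hζT, hζ⟩
      exact csInf_mem hne
    set t : ℕ → Ordinal := fun n => g^[n] (g α) with ht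
    have htsucc : ∀ n, t (n + 1) = g (t n) := by
      intro n; simp only [ht, Function.iterate_succ_apply']
    have htm : ∀ n, t n ∈ T ∧ t n < l := by
      intro n; induction n with
      | zero => exact ⟨(hgm α hα).1, hTlt _ (hgm α hα).1⟩
      | succ k ih =>
        rw [htsucc]
        exact ⟨(hgm _ ih.2).1, hTlt _ (hgm _ ih.2).1⟩
    have htinc : ∀ n, t n < t (n + 1) := by
      intro n; rw [htsucc]; exact (hgm _ (htm n).2).2
    set δ := ⨆ n, t n with hδ
    have hδl : δ < l := hcof t fun n => (htm n).2
    have hle : ∀ n, t n ≤ δ := fun n => Ordinal.le_iSup t n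
    have htIio : ∀ n, t n ∈ T ∩ Iio δ :=
      fun n => ⟨(htm n).1, lt_of_lt_of_le (htinc n) (hle (n + 1))⟩
    have hαδ : α < δ := lt_of_lt_of_le (hgm α hα).2 (hle 0)
    refine ⟨δ, ⟨hδl, (lt_of_le_of_lt (zero_le (a := α)) hαδ).ne', ?_⟩, hαδ⟩
    refine le_antisymm (csSup_le' fun x hx => hx.2.le) ?_
    refine ciSup_le fun n => le_csSup ⟨δ, fun x hx => hx.2.le⟩ (htIio n)
  have accC : Acc ⊆ p.C := by
    rintro δ ⟨hδl, hδ0, hδs⟩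
    apply hCcl δ hδl hδ0
    have hne : (T ∩ Iio δ).Nonempty := by
      by_contra h
      rw [not_nonempty_iff_eq_empty] at h
      rw [h, csSup_empty] at hδs
      exact hδ0 (by simpa using hδs.symm)
    refine le_antisymm (csSup_le' fun x hx => hx.2.le) ?_
    calc δ = sSup (T ∩ Iio δ) := hδs.symm
      _ ≤ sSup (p.C ∩ Iio δ) :=
        csSup_le_csSup ⟨δ, fun x hx => hx.2.le⟩ hne fun x hx => ⟨hTC hx.1, hx.2⟩
  -- the three anchors
  obtain ⟨β0, hβ0C, hβ0γ⟩ := hCub p.γ p.γ_lt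
  have hγsne : (p.C ∩ Ici p.γ).Nonempty := ⟨β0, hβ0C, hβ0γ.le⟩
  set γs := sInf (p.C ∩ Ici p.γ) with hγsdef
  have hγs : γs ∈ p.C ∩ Ici p.γ := csInf_mem hγsne
  have hγsl : γs < l := hCsub hγs.1
  obtain ⟨ζ0, hζ0T, hζ0⟩ := hTu γs hγsl
  set ζ1 := sInf (T ∩ Ici γs) with hζ1def
  have hζ1 : ζ1 ∈ T ∩ Ici γs := csInf_mem ⟨ζ0, hζ0T, hζ0.le⟩
  have hζ1l : ζ1 < l := hTlt _ hζ1.1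
  obtain ⟨e0, he0A, he0⟩ := accUnb ζ1 hζ1l
  set ε1 := sInf (Acc ∩ Ioi ζ1) with hε1def
  have hε1 : ε1 ∈ Acc ∩ Ioi ζ1 := csInf_mem ⟨e0, he0A, he0⟩
  have hε1l : ε1 < l := hε1.1.1
  have hγsε1 : γs < ε1 := lt_of_le_of_lt hζ1.2 hε1.2
  -- the new club
  set Cq : Set Ordinal := p.C ∩ Iio p.γ ∪ {γs} ∪ Acc ∩ Ici ε1 with hCq
  have hmem : ∀ x ∈ Cq, x ∈ p.C ∩ Iio p.γ ∨ x = γs ∨ x ∈ Acc ∧ ε1 ≤ x := by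
    rintro x ((hx | hx) | hx)
    · exact Or.inl hx
    · exact Or.inr (Or.inl hx)
    · exact Or.inr (Or.inr hx)
  have hmemI : ∀ x, x ∈ p.C ∩ Iio p.γ ∨ x = γs ∨ x ∈ Acc ∧ ε1 ≤ x → x ∈ Cq := by
    rintro x (hx | hx | hx)
    · exact Set.mem_union_left _ (Set.mem_union_left _ hx)
    · exact Set.mem_union_left _ (Set.mem_union_right _ (mem_singleton_iff.mpr hx))
    · exact Set.mem_union_right _ hx
  have hCqC : Cq ⊆ p.C := by
    intro x hx
    rcases hmem x hx with hx | hx | hx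
    · exact hx.1
    · exact hx ▸ hγs.1
    · exact accC hx.1
  have hCqub : ∀ α, α < l → ∃ β ∈ Cq, α < β := by
    intro α hα
    obtain ⟨e, heA, he⟩ := accUnb (max α ε1) (max_lt hα hε1l)
    exact ⟨e, hmemI e (Or.inr (Or.inr ⟨heA, (le_max_right α ε1).trans he.le⟩)),
      lt_of_le_of_lt (le_max_left α ε1) he⟩
  have hnxtq : ∀ δ, δ < l → nxt Cq δ ∈ Cq ∧ δ < nxt Cq δ := by
    intro δ hδ
    obtain ⟨β, hβ, hβδ⟩ := hCqub δ hδ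
    have hne : (Cq ∩ Ioi δ).Nonempty := ⟨β, hβ, hβδ⟩
    exact csInf_mem hne
  have hnxtp : ∀ ζ, ζ < l → ζ < nxt p.C ζ := by
    intro ζ hζ
    obtain ⟨β, hβ, hβζ⟩ := hCub ζ hζ
    exact (csInf_mem (⟨β, hβ, hβζ⟩ : (p.C ∩ Ioi ζ).Nonempty)).2
  -- witness function
  set ζh : Ordinal → Ordinal := fun δ => if p.γ ≤ δ then sInf (T ∩ Ici δ) else δ with hζh
  have Key : ∀ δ ∈ Cq, ζh δ ∈ p.C ∧ δ ≤ ζh δ ∧ ζh δ < nxt Cq δ ∧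
      (p.γ ≤ δ → ζh δ ∈ T) := by
    intro δ hδ
    have hδl : δ < l := hCsub (hCqC hδ)
    obtain ⟨hnqm, hnqgt⟩ := hnxtq δ hδl
    by_cases hγδ : p.γ ≤ δ
    · have hval : ζh δ = sInf (T ∩ Ici δ) := if_pos hγδ
      obtain ⟨ζ', hζ'T, hζ'⟩ := hTu δ hδl
      have hζm : ζh δ ∈ T ∩ Ici δ := by
        rw [hval]; exact csInf_mem ⟨ζ', hζ'T, hζ'.le⟩
      have hlt : ζh δ < nxt Cq δ := by
        rcases hmem δ hδ with hc | hc | hc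
        · exact absurd hγδ (not_le.2 hc.2)
        · -- δ = γs
          have hv2 : ζh δ = ζ1 := by rw [hval, hc]
          rcases hmem _ hnqm with hc' | hc' | hc'
          · exact absurd hnqgt (not_lt.2 ((hc'.2.le.trans hγs.2).trans_eq hc.symm))
          · exact absurd (hc'.trans hc.symm) hnqgt.ne'
          · rw [hv2]; exact lt_of_lt_of_le hε1.2 hc'.2
        · -- δ ∈ Acc, ε1 ≤ δ
          rcases hmem _ hnqm with hc' | hc' | hc'
          · exact absurd hnqgt (not_lt.2 ((hc'.2.le.trans hγs.2).trans
              (hζ1.2.trans (hε1.2.le.trans hc.2))))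
          · exact absurd hnqgt
              (not_lt.2 (hc'.le.trans (hζ1.2.trans (hε1.2.le.trans hc.2))))
          · obtain ⟨⟨hεl, hε0, hεs⟩, -⟩ := hc'
            have hex : ∃ ζ ∈ T ∩ Iio (nxt Cq δ), δ < ζ := by
              by_contra h
              push_neg at h
              have h2 : sSup (T ∩ Iio (nxt Cq δ)) ≤ δ := csSup_le' fun x hx => h x hx
              rw [hεs] at h2
              exact absurd hnqgt (not_lt.2 h2)
            obtain ⟨ζ, ⟨hζT, hζlt⟩, hδζ⟩ := hex
            calc ζh δ ≤ ζ := by rw [hval]; exact csInf_le' ⟨hζT, hδζ.le⟩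
              _ < nxt Cq δ := hζlt
      exact ⟨hTC hζm.1, hζm.2, hlt, fun _ => hζm.1⟩
    · have hval : ζh δ = δ := if_neg hγδ
      rw [hval]
      exact ⟨hCqC hδ, le_rfl, hnqgt, fun h => absurd h hγδ⟩
  have KeyNxt : ∀ δ ∈ Cq, nxt p.C (ζh δ) ≤ nxt Cq δ := by
    intro δ hδ
    obtain ⟨h1, h2, h3, h4⟩ := Key δ hδ
    have hδl : δ < l := hCsub (hCqC hδ)
    exact csInf_le' ⟨hCqC (hnxtq δ hδl).1, h3⟩
  -- closedness
  have hCqcl : ∀ δ, δ < l → δ ≠ 0 → sSup (Cq ∩ Iio δ) = δ → δ ∈ Cq := by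
    intro δ hδl hδ0 hs
    rcases le_or_gt δ ε1 with hle | hgt
    · rcases le_or_gt δ p.γ with hle2 | hgt2
      · have hsub : Cq ∩ Iio δ ⊆ p.C ∩ Iio δ := fun x hx => ⟨hCqC hx.1, hx.2⟩
        have hne : (Cq ∩ Iio δ).Nonempty := by
          by_contra h
          rw [not_nonempty_iff_eq_empty] at h
          rw [h, csSup_empty] at hs
          exact hδ0 (by simpa using hs.symm)
        have hδC : δ ∈ p.C := by
          apply hCcl δ hδl hδ0
          refine le_antisymm (csSup_le' fun x hx => hx.2.le) ?_
          have h2 := csSup_le_csSup (⟨δ, fun x hx => hx.2.le⟩ :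
            BddAbove (p.C ∩ Iio δ)) hne hsub
          rw [hs] at h2
          exact h2
        rcases lt_or_eq_of_le hle2 with hlt | heq
        · exact hmemI δ (Or.inl ⟨hδC, hlt⟩)
        · have h1 : γs ≤ δ := csInf_le' ⟨hδC, heq.ge⟩
          have h2 : δ ≤ γs := heq.le.trans hγs.2
          exact hmemI δ (Or.inr (Or.inl (le_antisymm h2 h1)))
      · have hxle : ∀ x ∈ Cq ∩ Iio δ, x ≤ γs := by
          rintro x ⟨hx, hxδ⟩
          rcases hmem x hx with hc | hc | hc
          · exact hc.2.le.trans hγs.2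
          · exact hc.le
          · exact absurd hxδ (not_lt.2 (hle.trans hc.2))
        have hδγs : δ ≤ γs := by
          have h2 := csSup_le' hxle
          rw [hs] at h2
          exact h2
        rcases eq_or_lt_of_le hδγs with heq | hlt
        · exact hmemI δ (Or.inr (Or.inl heq))
        · exfalso
          have hxle2 : ∀ x ∈ Cq ∩ Iio δ, x ≤ p.γ := by
            rintro x ⟨hx, hxδ⟩
            rcases hmem x hx with hc | hc | hc
            · exact hc.2.le
            · exact absurd (hc ▸ hxδ) (not_lt.2 hδγs)
            · exact absurd hxδ (not_lt.2 (hle.trans hc.2))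
          have h2 := csSup_le' hxle2
          rw [hs] at h2
          exact absurd hgt2 (not_lt.2 h2)
    · -- ε1 < δ : δ is an accumulation point of T
      have hcof : ∀ β, β < δ → ∃ ζ ∈ T, β < ζ ∧ ζ < δ := by
        intro β hβ
        have hmax : max β ε1 < δ := max_lt hβ hgt
        have hex : ∃ x ∈ Cq ∩ Iio δ, max β ε1 < x := by
          by_contra h
          push_neg at h
          have h2 : sSup (Cq ∩ Iio δ) ≤ max β ε1 := csSup_le' fun x hx => h x hx
          rw [hs] at h2
          exact absurd hmax (not_lt.2 h2)
        obtain ⟨x, ⟨hxC, hxδ⟩, hxgt⟩ := hex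
        have hε1x : ε1 < x := lt_of_le_of_lt (le_max_right β ε1) hxgt
        have hx3 : x ∈ Acc := by
          rcases hmem x hxC with hc | hc | hc
          · exact absurd hε1x (not_lt.2 ((hc.2.le.trans hγs.2).trans
              (hζ1.2.trans hε1.2.le)))
          · exact absurd hε1x (not_lt.2 (hc.le.trans (hζ1.2.trans hε1.2.le)))
          · exact hc.1
        have hex2 : ∃ ζ ∈ T ∩ Iio x, β < ζ := by
          by_contra h
          push_neg at h
          have h2 : sSup (T ∩ Iio x) ≤ β := csSup_le' fun y hy => h y hy
          rw [hx3.2.2] at h2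
          exact absurd (lt_of_le_of_lt (le_max_left β ε1) hxgt) (not_lt.2 h2)
        obtain ⟨ζ, ⟨hζT, hζx⟩, hβζ⟩ := hex2
        exact ⟨ζ, hζT, hβζ, hζx.trans hxδ⟩
      refine hmemI δ (Or.inr (Or.inr ⟨⟨hδl, hδ0, ?_⟩, hgt.le⟩))
      refine le_antisymm (csSup_le' fun x hx => hx.2.le) (le_of_not_gt fun h => ?_)
      obtain ⟨ζ, hζT, hgt', hlt'⟩ := hcof _ h
      have hbdd : BddAbove (T ∩ Iio δ) := ⟨δ, fun x hx => hx.2.le⟩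
      have hmem2 : ζ ∈ T ∩ Iio δ := ⟨hζT, hlt'⟩
      exact absurd (le_csSup hbdd hmem2) (not_le.2 hgt')
  -- assemble the condition q
  refine ⟨⟨p.γ, Cq,
    fun δ => {B | B ⊆ Ico δ (nxt Cq δ) ∧ B ∩ Ico (ζh δ) (nxt p.C (ζh δ)) ∈ p.d (ζh δ)},
    p.γ_lt, ⟨fun x hx => hCsub (hCqC hx), hCqcl, hCqub⟩,
    fun δ hδ => p.lim δ (hCqC hδ), ?_⟩, ?_, ?_⟩
  · -- ultra
    intro δ hδ
    obtain ⟨h1, h2, h3, -⟩ := Key δ hδ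
    exact isUltraOn_ext (p.ultra _ h1) (Ico_subset_Ico h2 (KeyNxt δ hδ))
  · -- Q1le
    refine ⟨le_rfl, fun x hx => hmemI x (Or.inl hx), hCqC, ?_⟩
    intro δ hδ B hB
    obtain ⟨h1, h2, h3, -⟩ := Key δ hδ
    exact ⟨ζh δ, ⟨h1, h2, h3⟩, hB.2⟩
  · -- decision
    intro δ hδ hγδ
    obtain ⟨h1, h2, h3, h4⟩ := Key δ hδ
    exact ⟨ζh δ, h4 hγδ, Ico_subset_Ico h2 (KeyNxt δ hδ), fun B => Iff.rfl⟩

/-- Proposition 1.2(4): for every `p ∈ Q¹_λ` and `A ⊆ λ` there is `q ≥ p` deciding `A`: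
either `A ∩ Z^q_δ ∈ d^q_δ` for all `δ ∈ C^q \ γ^p`, or `A ∩ Z^q_δ ∉ d^q_δ` for all
such `δ`. -/
theorem stmt9 (κ : Cardinal) (hreg : κ.IsRegular) (hunc : ℵ₀ < κ)
    (p : Q1 κ.ord) (A : Set Ordinal) (hA : A ⊆ Iio κ.ord) :
    ∃ q : Q1 κ.ord, Q1le κ.ord p q ∧
      ((∀ δ ∈ q.C, p.γ ≤ δ → A ∩ Ico δ (nxt q.C δ) ∈ q.d δ) ∨
       (∀ δ ∈ q.C, p.γ ≤ δ → A ∩ Ico δ (nxt q.C δ) ∉ q.d δ)) := by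
  by_cases hub : ∀ α, α < κ.ord →
      ∃ ζ ∈ {ζ | ζ ∈ p.C ∧ A ∩ Ico ζ (nxt p.C ζ) ∈ p.d ζ}, α < ζ
  · obtain ⟨q, hle, hdec⟩ := exists_decided κ.ord
      (fun f hf => Cardinal.iSup_lt_ord_lift_of_isRegular hreg (by simpa using hunc) hf)
      p _ (fun ζ h => h.1) hub
    refine ⟨q, hle, Or.inl ?_⟩
    intro δ hδ hγδ
    obtain ⟨ζ, hζT, hsub, hiff⟩ := hdec δ hδ hγδ
    refine (hiff _).2 ⟨inter_subset_right, ?_⟩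
    have hEq : A ∩ Ico δ (nxt q.C δ) ∩ Ico ζ (nxt p.C ζ) = A ∩ Ico ζ (nxt p.C ζ) := by
      rw [inter_assoc, inter_eq_self_of_subset_right hsub]
    rw [hEq]
    exact hζT.2
  · push_neg at hub
    obtain ⟨α, hαl, hbd⟩ := hub
    have hub' : ∀ β, β < κ.ord →
        ∃ ζ ∈ {ζ | ζ ∈ p.C ∧ A ∩ Ico ζ (nxt p.C ζ) ∉ p.d ζ}, β < ζ := by
      intro β hβ
      obtain ⟨ζ, hζC, hζgt⟩ := p.club.2.2 (max β α) (max_lt hβ hαl)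
      refine ⟨ζ, ⟨hζC, fun hd => ?_⟩, lt_of_le_of_lt (le_max_left β α) hζgt⟩
      exact absurd (hbd ζ ⟨hζC, hd⟩)
        (not_le.2 (lt_of_le_of_lt (le_max_right β α) hζgt))
    obtain ⟨q, hle, hdec⟩ := exists_decided κ.ord
      (fun f hf => Cardinal.iSup_lt_ord_lift_of_isRegular hreg (by simpa using hunc) hf)
      p _ (fun ζ h => h.1) hub'
    refine ⟨q, hle, Or.inr ?_⟩
    intro δ hδ hγδ hmem
    obtain ⟨ζ, hζT, hsub, hiff⟩ := hdec δ hδ hγδ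
    have h2 := ((hiff _).1 hmem).2
    have hEq : A ∩ Ico δ (nxt q.C δ) ∩ Ico ζ (nxt p.C ζ) = A ∩ Ico ζ (nxt p.C ζ) := by
      rw [inter_assoc, inter_eq_self_of_subset_right hsub]
    rw [hEq] at h2
    exact hζT.2 h2

end Sh830

end
end

section
/- Let λ be a regular uncountable cardinal. Assume that G* ⊆ Q⁰_λ is ≤⁰-directed and ≤⁰-downward closed, p ∈ G*, X ⊆ C^p has cardinality λ, and C ⊆ C^p is a club of λ such that p is restrictable to ⟨X, C⟩. If ∪_{x∈X} Z^p_x ∈ fil(G*), then p↾⟨X, C⟩ ∈ G*. -/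
open Set Ordinal Cardinal

noncomputable section

namespace Sh830

lemma nxt_mem_club {C : Set Ordinal} {l α : Ordinal} (hC : IsClubIn C l) (hα : α < l) :
    nxt C α ∈ C ∧ α < nxt C α := by
  obtain ⟨β, hβC, hβ⟩ := hC.2.2 α hα
  have hne : (C ∩ Ioi α).Nonempty := ⟨β, hβC, hβ⟩
  exact csInf_mem hne

lemma fil_superset {l : Ordinal} (s : Q0 l) {A B : Set Ordinal}
    (hA : A ∈ fil l s) (hAB : A ⊆ B) (hB : B ⊆ Iio l) : B ∈ fil l s := by
  obtain ⟨-, ε, hε, h⟩ := hA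
  refine ⟨hB, ε, hε, fun δ hδ hεδ => ?_⟩
  exact (s.ultra δ hδ).2.2.2.1 _ _ (h δ hδ hεδ)
    (inter_subset_inter_left _ hAB) inter_subset_right

lemma fil_inter {l : Ordinal} (s : Q0 l) {A B : Set Ordinal}
    (hA : A ∈ fil l s) (hB : B ∈ fil l s) : A ∩ B ∈ fil l s := by
  obtain ⟨hA1, ε1, hε1, h1⟩ := hA
  obtain ⟨hB1, ε2, hε2, h2⟩ := hB
  refine ⟨fun x hx => hA1 hx.1, max ε1 ε2, max_lt hε1 hε2, fun δ hδ hεδ => ?_⟩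
  have key := (s.ultra δ hδ).2.2.2.2.1 _ _
    (h1 δ hδ (le_trans (le_max_left _ _) hεδ))
    (h2 δ hδ (le_trans (le_max_right _ _) hεδ))
  have he : A ∩ B ∩ Ico δ (nxt s.C δ) =
      (A ∩ Ico δ (nxt s.C δ)) ∩ (B ∩ Ico δ (nxt s.C δ)) := by
    ext z; simp only [mem_inter_iff]; tauto
  rw [he]; exact key

lemma club_interval {C : Set Ordinal} {l ε0 δ : Ordinal} (hC : IsClubIn C l)
    (hε0 : ε0 ∈ C) (h0 : ε0 ≠ 0) (hle : ε0 ≤ δ) (hδ : δ < l) :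
    ∃ α ∈ C, ε0 ≤ α ∧ α ≤ δ ∧ δ < nxt C α := by
  have hSne : (C ∩ Iic δ).Nonempty := ⟨ε0, hε0, hle⟩
  have hbdd : BddAbove (C ∩ Iic δ) := ⟨δ, fun x hx => hx.2⟩
  set α := sSup (C ∩ Iic δ) with hα
  have hαδ : α ≤ δ := csSup_le hSne fun b hb => hb.2
  have hεα : ε0 ≤ α := le_csSup hbdd ⟨hε0, hle⟩
  have hαl : α < l := lt_of_le_of_lt hαδ hδ
  have hα0 : α ≠ 0 := fun h => h0 (nonpos_iff_eq_zero.mp (h ▸ hεα))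
  have hαC : α ∈ C := by
    by_cases hc : α ∈ C
    · exact hc
    · exfalso
      have heq : C ∩ Iio α = C ∩ Iic δ := by
        ext x
        constructor
        · rintro ⟨hx1, hx2⟩; exact ⟨hx1, le_trans hx2.le hαδ⟩
        · rintro ⟨hx1, hx2⟩
          refine ⟨hx1, lt_of_le_of_ne (le_csSup hbdd ⟨hx1, hx2⟩) ?_⟩
          rintro rfl; exact hc hx1
      exact hc (hC.2.1 α hαl hα0 (by rw [heq]))
  refine ⟨α, hαC, hεα, hαδ, ?_⟩
  by_contra hcon
  push_neg at hcon
  have hn := nxt_mem_club hC hαl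
  have hmem : nxt C α ∈ C ∩ Iic δ := ⟨hn.1, hcon⟩
  exact absurd (le_csSup hbdd hmem) (not_le.mpr hn.2)

lemma Z_disjoint {l : Ordinal} (p : Q0 l) {x δ : Ordinal} (hx : x ∈ p.C) (hδ : δ ∈ p.C)
    (hne : x ≠ δ) {z : Ordinal} (hz1 : z ∈ Ico x (nxt p.C x))
    (hz2 : z ∈ Ico δ (nxt p.C δ)) : False := by
  rcases lt_or_gt_of_ne hne with h | h
  · have hh : nxt p.C x ≤ δ := csInf_le' ⟨hδ, h⟩
    exact absurd hz2.1 (not_le.mpr (lt_of_lt_of_le hz1.2 hh))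
  · have hh : nxt p.C δ ≤ x := csInf_le' ⟨hx, h⟩
    exact absurd hz1.1 (not_le.mpr (lt_of_lt_of_le hz2.2 hh))

/-- Proposition 2.10(1): if `G*` is `≤⁰`-directed and `≤⁰`-downward closed, `p ∈ G*`
is restrictable to `⟨X, C⟩` and `∪_{x ∈ X} Z^p_x ∈ fil(G*)`, then the restriction
`p↾⟨X, C⟩` belongs to `G*`. -/
theorem stmt12 (κ : Cardinal) (hreg : κ.IsRegular) (hunc : ℵ₀ < κ)
    (G : Set (Q0 κ.ord))
    (hdir : DirLtOn κ.ord ℵ₀ G (le0 κ.ord))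
    (hdc : ∀ p ∈ G, ∀ q : Q0 κ.ord, le0 κ.ord q p → q ∈ G)
    (p : Q0 κ.ord) (hp : p ∈ G)
    (X : Set Ordinal) (hXsub : X ⊆ p.C) (hXcard : #X = #(Iio κ.ord))
    (C : Set Ordinal) (hCsub : C ⊆ p.C) (hclub : IsClubIn C κ.ord)
    (hres : ∀ α ∈ C, ∃! x, x ∈ X ∩ Ico α (nxt C α))
    (hfil : (⋃ x ∈ X, Ico x (nxt p.C x)) ∈ filG κ.ord G) :
    ∃ q ∈ G, q.C = C ∧ ∀ α ∈ C, ∀ x ∈ X ∩ Ico α (nxt C α),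
      q.d α = {A | A ⊆ Ico α (nxt C α) ∧ A ∩ Ico x (nxt p.C x) ∈ p.d x} := by
  -- the selector function
  set xs : Ordinal → Ordinal := fun α => sInf (X ∩ Ico α (nxt C α)) with hxs
  have hxsel : ∀ α ∈ C, xs α ∈ X ∩ Ico α (nxt C α) ∧
      ∀ y ∈ X ∩ Ico α (nxt C α), y = xs α := by
    intro α hα
    obtain ⟨x, hx, huniq⟩ := hres α hα
    have hne : (X ∩ Ico α (nxt C α)).Nonempty := ⟨x, hx⟩
    have hmem := csInf_mem hne
    exact ⟨hmem, fun y hy => (huniq y hy).trans (huniq _ hmem).symm⟩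
  have hsub : ∀ α ∈ C, Ico (xs α) (nxt p.C (xs α)) ⊆ Ico α (nxt C α) := by
    intro α hα z hz
    have hx := (hxsel α hα).1
    have hnxt := nxt_mem_club hclub (hclub.1 hα)
    have h1 : nxt p.C (xs α) ≤ nxt C α := csInf_le' ⟨hCsub hnxt.1, hx.2.2⟩
    exact ⟨le_trans hx.2.1 hz.1, lt_of_lt_of_le hz.2 h1⟩
  -- the restricted condition q
  set dq : Ordinal → Set (Set Ordinal) := fun α =>
    {A | A ⊆ Ico α (nxt C α) ∧ A ∩ Ico (xs α) (nxt p.C (xs α)) ∈ p.d (xs α)} with hdq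
  have hqultra : ∀ α ∈ C, IsUltraOn (Ico α (nxt C α)) (dq α) := by
    intro α hα
    have hx := (hxsel α hα).1
    have hxp : xs α ∈ p.C := hXsub hx.1
    have hu := p.ultra _ hxp
    have hZs := hsub α hα
    refine ⟨fun A hA => hA.1, ⟨Subset.rfl, ?_⟩, ?_, ?_, ?_, ?_⟩
    · rw [inter_eq_self_of_subset_right hZs]; exact hu.2.1
    · rintro ⟨-, h2⟩
      rw [empty_inter] at h2
      exact hu.2.2.1 h2
    · rintro A B ⟨hA1, hA2⟩ hAB hB
      exact ⟨hB, hu.2.2.2.1 _ _ hA2 (inter_subset_inter_left _ hAB) inter_subset_right⟩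
    · rintro A B ⟨hA1, hA2⟩ ⟨hB1, hB2⟩
      refine ⟨fun z hz => hA1 hz.1, ?_⟩
      have he : A ∩ B ∩ Ico (xs α) (nxt p.C (xs α)) =
          (A ∩ Ico (xs α) (nxt p.C (xs α))) ∩ (B ∩ Ico (xs α) (nxt p.C (xs α))) := by
        ext z; simp only [mem_inter_iff]; tauto
      rw [he]; exact hu.2.2.2.2.1 _ _ hA2 hB2
    · intro A hA
      rcases hu.2.2.2.2.2 (A ∩ Ico (xs α) (nxt p.C (xs α))) inter_subset_right with h | h
      · exact Or.inl ⟨hA, h⟩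
      · right
        refine ⟨diff_subset, ?_⟩
        have he : (Ico α (nxt C α) \ A) ∩ Ico (xs α) (nxt p.C (xs α)) =
            Ico (xs α) (nxt p.C (xs α)) \ (A ∩ Ico (xs α) (nxt p.C (xs α))) := by
          ext z
          simp only [mem_inter_iff, mem_diff]
          constructor
          · rintro ⟨⟨h1, h2⟩, h3⟩; exact ⟨h3, fun hc => h2 hc.1⟩
          · rintro ⟨h1, h2⟩
            exact ⟨⟨hZs h1, fun hc => h2 ⟨hc, h1⟩⟩, h1⟩
        rw [he]; exact h
  set q : Q0 κ.ord := ⟨C, dq, hclub, fun δ hδ => p.lim δ (hCsub hδ), hqultra⟩ with hq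
  -- the witness r for the union of intervals
  set B : Set Ordinal := ⋃ x ∈ X, Ico x (nxt p.C x) with hB
  rw [filG, mem_iUnion₂] at hfil
  obtain ⟨r, hrG, hBr⟩ := hfil
  -- an upper bound of p and r in G
  obtain ⟨s, hsG, hs⟩ := hdir.2 {p, r}
    (by rintro t (rfl | rfl) <;> assumption)
    (((Set.finite_singleton r).insert p).lt_aleph0)
  have hps : le0 κ.ord p s := hs p (mem_insert _ _)
  have hrs : le0 κ.ord r s := hs r (mem_insert_of_mem _ rfl)
  -- key claim : fil q ⊆ fil s
  have hkey : le0 κ.ord q s := by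
    intro A hA
    obtain ⟨hAl, ε, hεl, hAε⟩ := hA
    have hABfilp : A ∪ (Iio κ.ord \ B) ∈ fil κ.ord p := by
      have hε1 := nxt_mem_club hclub hεl
      set ε₁ := nxt C ε with hε₁
      have hε₁l : ε₁ < κ.ord := hclub.1 hε1.1
      refine ⟨fun z hz => by rcases hz with h | h; exacts [hAl h, h.1], ε₁, hε₁l, ?_⟩
      intro δ hδ hεδ
      have hδl : δ < κ.ord := p.club.1 hδ
      by_cases hδX : δ ∈ X
      · have hε₁0 : ε₁ ≠ 0 := ((p.lim _ (hCsub hε1.1)).pos).ne'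
        obtain ⟨α, hαC, hε₁α, hαδ, hδnxt⟩ := club_interval hclub hε1.1 hε₁0 hεδ hδl
        have hδxs : δ = xs α := (hxsel α hαC).2 δ ⟨hδX, hαδ, hδnxt⟩
        have hεα : ε ≤ α := le_trans hε1.2.le hε₁α
        have h2 := (hAε α hαC hεα).2
        rw [← hδxs] at h2
        have heq : (A ∩ Ico α (nxt C α)) ∩ Ico δ (nxt p.C δ) = A ∩ Ico δ (nxt p.C δ) := by
          ext z
          simp only [mem_inter_iff]
          constructor
          · rintro ⟨⟨h1, -⟩, h3⟩; exact ⟨h1, h3⟩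
          · rintro ⟨h1, h3⟩
            have := hsub α hαC (hδxs ▸ h3)
            exact ⟨⟨h1, this⟩, h3⟩
        rw [heq] at h2
        exact (p.ultra δ hδ).2.2.2.1 _ _ h2
          (inter_subset_inter_left _ subset_union_left) inter_subset_right
      · have heq : (A ∪ (Iio κ.ord \ B)) ∩ Ico δ (nxt p.C δ) = Ico δ (nxt p.C δ) := by
          apply Subset.antisymm inter_subset_right
          intro z hz
          refine ⟨Or.inr ⟨?_, ?_⟩, hz⟩
          · have hn := nxt_mem_club p.club hδl
            exact lt_of_lt_of_le hz.2 ((p.club.1 hn.1).le)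
          · intro hzB
            rw [hB, mem_iUnion₂] at hzB
            obtain ⟨x, hxX, hzx⟩ := hzB
            exact Z_disjoint p (hXsub hxX) hδ (fun h => hδX (h ▸ hxX)) hzx hz
        rw [heq]
        exact (p.ultra δ hδ).2.1
    have h1 : A ∪ (Iio κ.ord \ B) ∈ fil κ.ord s := hps hABfilp
    have h2 : B ∈ fil κ.ord s := hrs hBr
    have h3 := fil_inter s h1 h2
    have heq : (A ∪ (Iio κ.ord \ B)) ∩ B = A ∩ B := by
      ext z; simp only [mem_inter_iff, mem_union, mem_diff]; tauto
    rw [heq] at h3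
    exact fil_superset s h3 inter_subset_left hAl
  refine ⟨q, hdc s hsG q hkey, rfl, ?_⟩
  intro α hα x hx
  have hxeq : x = xs α := (hxsel α hα).2 x hx
  rw [hxeq]

end Sh830

end
end

section
/- Assume θ < λ = cf(λ) < 2^θ, with λ uncountable. Then cov(M^λ_{λ,λ}) = λ⁺. -/
open Set Ordinal Cardinal

noncomputable section

namespace Sh830

lemma isNwd_empty (l : Ordinal) : IsNwd l ∅ := by
  refine ⟨empty_subset _, fun s hs α hα => ⟨s, hs, α, le_refl _, hα, fun _ _ => rfl, ?_⟩⟩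
  simp

lemma isNwd_singleton {l : Ordinal} (hl : Order.IsSuccLimit l) {g : Ordinal → Ordinal}
    (hg : g ∈ funSp l) : IsNwd l {g} := by
  refine ⟨singleton_subset_iff.2 hg, fun s hs α hα => ?_⟩
  refine ⟨fun β => if β = α then g α + 1 else s β, ?_, α + 1, le_of_lt (lt_add_one α),
    hl.add_one_lt hα, fun β hβ => if_neg hβ.ne, fun f hf hag => ?_⟩
  · intro β hβ
    by_cases h : β = α
    · simp only [h, if_pos rfl]
      exact hl.add_one_lt (hg α hα)
    · simpa [h] using hs β hβ
  · have := hag α (lt_add_one α)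
    simp only [if_pos rfl] at this
    simp only [mem_singleton_iff]
    intro hfg
    rw [hfg] at this
    simp only [if_true] at this
    exact (lt_add_one (g α)).ne this


def blockSet (l bnd : Ordinal) (η : Ordinal → Ordinal) : Set (Ordinal → Ordinal) :=
  {f | f ∈ funSp l ∧ ¬ ∃ δ, δ < l ∧ ∀ i, i < bnd → f (δ + i) = η i}

lemma isNwd_blockSet {κ : Cardinal} (hκ : ℵ₀ ≤ κ) {bnd : Ordinal} (hbnd : bnd.card < κ)
    {η : Ordinal → Ordinal} (hη : ∀ i, i < bnd → η i < κ.ord) :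
    IsNwd κ.ord (blockSet κ.ord bnd η) := by
  refine ⟨fun f hf => hf.1, fun s hs α hα => ?_⟩
  refine ⟨fun β => if α ≤ β ∧ β < α + bnd then η (β - α) else s β, ?_, α + bnd, ?_, ?_, ?_, ?_⟩
  · intro β hβ
    dsimp only
    by_cases h : α ≤ β ∧ β < α + bnd
    · rw [if_pos h]
      refine hη _ ?_
      have := Ordinal.sub_lt_of_lt_add h.2 ?_
      · exact this
      · rcases eq_zero_or_pos bnd with h0 | h0
        · rw [h0, add_zero] at h
          exact absurd h.2 (not_lt.2 h.1)
        · exact h0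
    · rw [if_neg h]; exact hs β hβ
  · exact le_self_add
  · rw [Cardinal.lt_ord, Ordinal.card_add]
    exact Cardinal.add_lt_of_lt hκ (Cardinal.lt_ord.1 hα) hbnd
  · intro β hβ
    dsimp only
    rw [if_neg]
    rintro ⟨h1, -⟩
    exact absurd hβ (not_lt.2 h1)
  · intro f hf hag hmem
    refine hmem.2 ⟨α, hα, fun i hi => ?_⟩
    have h1 : α + i < α + bnd := by exact_mod_cast (add_lt_add_iff_left α).2 hi
    rw [hag (α + i) h1]
    dsimp only
    rw [if_pos ⟨le_self_add, h1⟩, Ordinal.add_sub_cancel]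


section Upper
open Classical


lemma inMIdeal_of_isNwd {l : Ordinal} (h1 : (1 : Ordinal) < l)
    {A : Set (Ordinal → Ordinal)} (hA : IsNwd l A) : InMIdeal l A := by
  refine ⟨hA.1, 1, h1, fun _ => A, fun i _ => hA, fun x hx => ?_⟩
  exact mem_biUnion (mem_Iio.2 zero_lt_one) hx

lemma exists_upper_family {θ κ : Cardinal} (hunc : ℵ₀ < κ) (hreg : κ.IsRegular)
    (hθ : θ < κ) (hlt : κ < 2 ^ θ) :
    ∃ S : Set (Set (Ordinal → Ordinal)),
      (∀ A ∈ S, InMIdeal κ.ord A) ∧ funSp κ.ord ⊆ ⋃₀ S ∧ #S = Cardinal.lift.{1,0} (Order.succ κ) := by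
  have hκ : ℵ₀ ≤ κ := hunc.le
  have hl : Order.IsSuccLimit (κ.ord) := isSuccLimit_ord hκ
  have hθinf : ℵ₀ ≤ θ := by
    by_contra h
    push_neg at h
    exact absurd (hunc.trans hlt) (not_lt.2 (Cardinal.power_lt_aleph0 (Cardinal.nat_lt_aleph0 2) h).le)
  have hbnd : (θ.ord).card < κ := by rwa [Cardinal.card_ord]
  -- index type
  set ι : Type 1 := ULift.{1} (Order.succ κ).out with hι
  have hmkι : #ι = Cardinal.lift.{1,0} (Order.succ κ) := by
    rw [hι, Cardinal.mk_uLift, Cardinal.mk_out]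
  have hsetcard : #(Set ↥(Iio θ.ord)) = Cardinal.lift.{1,0} (2 ^ θ) := by
    rw [Cardinal.mk_set, Ordinal.mk_Iio_ordinal, Cardinal.card_ord, Cardinal.lift_power,
      Cardinal.lift_ofNat]
  have hle : #ι ≤ #(Set ↥(Iio θ.ord)) := by
    rw [hmkι, hsetcard]
    exact Cardinal.lift_le.2 (Order.succ_le_of_lt hlt)
  obtain ⟨e⟩ := (Cardinal.le_def _ _).1 hle
  set η : ι → Ordinal → Ordinal := fun x β =>
    if h : β < θ.ord then (if (⟨β, h⟩ : ↥(Iio θ.ord)) ∈ e x then 1 else 0) else 0 with hηdef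
  have hη1 : ∀ x β, η x β ≤ 1 := by
    intro x β
    rw [hηdef]
    dsimp only
    split_ifs <;> simp
  have hηlt : ∀ x β, η x β < κ.ord := fun x β =>
    lt_of_le_of_lt (hη1 x β) (one_lt_of_isSuccLimit hl)
  have hηsp : ∀ x, η x ∈ funSp κ.ord := fun x β _ => hηlt x β
  have hηinj : Function.Injective η := by
    intro x y hxy
    apply e.injective
    ext b
    have := congrFun hxy b.1
    rw [hηdef] at this
    dsimp only at this
    have hb2 : (b : Ordinal) < θ.ord := b.2
    rw [dif_pos hb2, dif_pos hb2] at this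
    have hbx : (⟨(b : Ordinal), hb2⟩ : ↥(Iio θ.ord)) = b := Subtype.ext rfl
    rw [hbx] at this
    constructor <;> intro hb <;> by_contra hb'
    · rw [if_pos hb, if_neg hb'] at this
      exact one_ne_zero this
    · rw [if_neg hb', if_pos hb] at this
      exact one_ne_zero this.symm
  have hcover : ∀ f ∈ funSp κ.ord, ∃ x : ι, f ∈ blockSet κ.ord θ.ord (η x) := by
    intro f hf
    by_contra hc
    push_neg at hc
    have hbad : ∀ x : ι, ∃ δ, δ < κ.ord ∧ ∀ i, i < θ.ord → f (δ + i) = η x i := by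
      intro x
      have := hc x
      rw [blockSet] at this
      simp only [mem_setOf_eq, not_and, not_not] at this
      exact this hf
    choose δf hδlt hδeq using hbad
    have hinj : Function.Injective fun x : ι => (⟨δf x, hδlt x⟩ : ↥(Iio κ.ord)) := by
      intro x y hxy
      simp only [Subtype.mk.injEq] at hxy
      apply hηinj
      funext β
      by_cases h : β < θ.ord
      · rw [← hδeq x β h, ← hδeq y β h, show δf x = δf y from congrArg Subtype.val hxy]
      · rw [hηdef]; dsimp only; rw [dif_neg h, dif_neg h]
    have : #ι ≤ #↥(Iio κ.ord) := Cardinal.mk_le_of_injective hinj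
    rw [hmkι, Ordinal.mk_Iio_ordinal, Cardinal.card_ord] at this
    exact absurd this (not_le.2 (Cardinal.lift_lt.2 (Order.lt_succ κ)))
  refine ⟨Set.range (fun x : ι => blockSet κ.ord θ.ord (η x)) ∪
      Set.range (fun x : ι => ({η x} : Set (Ordinal → Ordinal))), ?_, ?_, ?_⟩
  · rintro A (⟨x, rfl⟩ | ⟨x, rfl⟩)
    · exact inMIdeal_of_isNwd (one_lt_of_isSuccLimit hl) (isNwd_blockSet hκ hbnd (fun i _ => hηlt x i))
    · exact inMIdeal_of_isNwd (one_lt_of_isSuccLimit hl) (isNwd_singleton hl (hηsp x))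
  · intro f hf
    obtain ⟨x, hx⟩ := hcover f hf
    exact ⟨_, Or.inl (mem_range_self x), hx⟩
  · apply le_antisymm
    · refine le_trans (Cardinal.mk_union_le _ _) ?_
      have h1 : #↥(Set.range (fun x : ι => blockSet κ.ord θ.ord (η x))) ≤ #ι := Cardinal.mk_range_le
      have h2 : #↥(Set.range (fun x : ι => ({η x} : Set (Ordinal → Ordinal)))) ≤ #ι := Cardinal.mk_range_le
      rw [hmkι] at h1 h2
      refine le_trans (add_le_add h1 h2) ?_
      rw [Cardinal.add_eq_self]
      rw [← Cardinal.lift_aleph0.{1,0}]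
      exact Cardinal.lift_le.2 (hκ.trans (Order.le_succ κ))
    · rw [← hmkι]
      refine Cardinal.mk_le_of_injective (f := fun x : ι =>
        (⟨{η x}, Or.inr (mem_range_self x)⟩ : ↥(Set.range (fun x : ι => blockSet κ.ord θ.ord (η x)) ∪
          Set.range (fun x : ι => ({η x} : Set (Ordinal → Ordinal)))))) ?_
      intro x y hxy
      simp only [Subtype.mk.injEq, Set.singleton_eq_singleton_iff] at hxy
      exact hηinj (Set.singleton_eq_singleton_iff.mp (congrArg Subtype.val hxy))

end Upper

section Lower

def Cty : Type 1 := (Ordinal → Ordinal) × Ordinal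

def nwdExtP (l : Ordinal) (A : Set (Ordinal → Ordinal)) (s : Ordinal → Ordinal) (α : Ordinal)
    (c : Cty) : Prop :=
  c.1 ∈ funSp l ∧ α ≤ c.2 ∧ c.2 < l ∧ (∀ β, β < α → c.1 β = s β) ∧
    ∀ f ∈ funSp l, (∀ β, β < c.2 → f β = c.1 β) → f ∉ A

open Classical in
def nwdExt (l : Ordinal) (A : Set (Ordinal → Ordinal)) (s : Ordinal → Ordinal) (α : Ordinal) :
    Cty :=
  if h : s ∈ funSp l ∧ α < l ∧ IsNwd l A then
    (show ∃ c : Cty, nwdExtP l A s α c from by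
      obtain ⟨t, ht, α', h1, h2, h3, h4⟩ := h.2.2.2 s h.1 α h.2.1
      exact ⟨(t, α'), ht, h1, h2, h3, h4⟩).choose
  else ((fun _ => 0), 0)

lemma nwdExt_spec {l : Ordinal} {A : Set (Ordinal → Ordinal)} {s : Ordinal → Ordinal}
    {α : Ordinal} (h : s ∈ funSp l ∧ α < l ∧ IsNwd l A) :
    nwdExtP l A s α (nwdExt l A s α) := by
  have e : nwdExt l A s α = _ := dif_pos h
  rw [e]
  exact Exists.choose_spec _

open Classical in
def sOf (i : Ordinal) (p : Ordinal → Cty) : Ordinal → Ordinal :=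
  fun β => if h : ∃ j, j < i ∧ β < (p j).2 then
    (p (sInf {j | j < i ∧ β < (p j).2})).1 β else 0

def aOf (i : Ordinal) (p : Ordinal → Cty) : Ordinal :=
  max i (Ordinal.bsup i (fun j _ => (p j).2))

def bCore (l : Ordinal) (W : Ordinal → Set (Ordinal → Ordinal)) (i : Ordinal)
    (p : Ordinal → Cty) : Cty :=
  nwdExt l (W i) (sOf i p) (aOf i p)

open Classical in
def pTr (i : Ordinal) (g : Ordinal → Cty) : Ordinal → Cty :=
  fun j => if h : j < i then g j else ((fun _ => 0), 0)

open Classical in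
def bSeq (l : Ordinal) (W : Ordinal → Set (Ordinal → Ordinal)) : Ordinal → Cty :=
  WellFounded.fix Ordinal.lt_wf
    (fun i pv => bCore l W i (fun j => if h : j < i then pv j h else ((fun _ => 0), 0)))

lemma bSeq_eq (l : Ordinal) (W : Ordinal → Set (Ordinal → Ordinal)) (i : Ordinal) :
    bSeq l W i = bCore l W i (pTr i (bSeq l W)) := by
  rw [bSeq, WellFounded.fix_eq]
  rfl

def bInv (l : Ordinal) (W : Ordinal → Set (Ordinal → Ordinal)) (i : Ordinal) : Prop :=
  (bSeq l W i).1 ∈ funSp l ∧ (bSeq l W i).2 < l ∧ i ≤ (bSeq l W i).2 ∧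
  (∀ j, j < i → ∀ β, β < (bSeq l W j).2 → (bSeq l W i).1 β = (bSeq l W j).1 β) ∧
  (∀ f ∈ funSp l, (∀ β, β < (bSeq l W i).2 → f β = (bSeq l W i).1 β) → f ∉ W i)

lemma bSeq_inv {κ : Cardinal} (hunc : ℵ₀ < κ) (hreg : κ.IsRegular)
    (W : Ordinal → Set (Ordinal → Ordinal)) (hW : ∀ i, IsNwd κ.ord (W i)) :
    ∀ i, i < κ.ord → bInv κ.ord W i := by
  have hl : Order.IsSuccLimit (κ.ord) := isSuccLimit_ord hunc.le
  intro i
  induction i using Ordinal.induction with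
  | _ i IH =>
  intro hi
  set g := bSeq κ.ord W with hg
  set p := pTr i g with hp
  have hpj : ∀ j, j < i → p j = g j := fun j hj => dif_pos hj
  -- s ∈ funSp
  have hs : sOf i p ∈ funSp κ.ord := by
    intro β hβ
    rw [sOf]
    split_ifs with h
    · have hJ := csInf_mem (show {j | j < i ∧ β < (p j).2}.Nonempty from h)
      set J := sInf {j | j < i ∧ β < (p j).2}
      rw [hpj J hJ.1]
      exact (IH J hJ.1 (hJ.1.trans hi)).1 β hβ
    · exact hl.pos
  have ha : aOf i p < κ.ord := by
    rw [aOf]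
    apply max_lt hi
    apply Cardinal.bsup_lt_ord_of_isRegular hreg (Cardinal.lt_ord.1 hi)
    intro j hj
    rw [hpj j hj]
    exact (IH j hj (hj.trans hi)).2.1
  have hcond : sOf i p ∈ funSp κ.ord ∧ aOf i p < κ.ord ∧ IsNwd κ.ord (W i) := ⟨hs, ha, hW i⟩
  have hgi : g i = nwdExt κ.ord (W i) (sOf i p) (aOf i p) := bSeq_eq κ.ord W i
  have hspec : nwdExtP κ.ord (W i) (sOf i p) (aOf i p) (g i) := by
    rw [hgi]; exact nwdExt_spec hcond
  obtain ⟨h1, h2, h3, h4, h5⟩ := hspec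
  refine ⟨h1, h3, le_trans (le_max_left _ _) h2, ?_, h5⟩
  intro j hj β hβ
  have hβa : β < aOf i p := by
    refine lt_of_lt_of_le ?_ (le_trans (Ordinal.le_bsup (fun j _ => (p j).2) j hj)
      (le_max_right i _))
    rw [hpj j hj]; exact hβ
  rw [h4 β hβa, sOf]
  have hne : ∃ j', j' < i ∧ β < (p j').2 := ⟨j, hj, by rw [hpj j hj]; exact hβ⟩
  rw [dif_pos hne]
  have hJ := csInf_mem (show {j' | j' < i ∧ β < (p j').2}.Nonempty from hne)
  set J := sInf {j' | j' < i ∧ β < (p j').2} with hJdef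
  have hJle : J ≤ j := csInf_le'
    (show j ∈ {j' | j' < i ∧ β < (p j').2} from ⟨hj, by rw [hpj j hj]; exact hβ⟩)
  have hJ2 : β < (g J).2 := by have := hJ.2; rwa [hpj J hJ.1] at this
  rw [hpj J hJ.1]
  rcases eq_or_lt_of_le hJle with rfl | hJj
  · rfl
  · exact ((IH j hj (hj.trans hi)).2.2.2.1 J hJj β hJ2).symm

lemma exists_avoiding {κ : Cardinal.{0}} (hunc : ℵ₀ < κ) (hreg : κ.IsRegular)
    (W : Ordinal.{0} → Set (Ordinal → Ordinal)) (hW : ∀ i, IsNwd κ.ord (W i)) :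
    ∃ f ∈ funSp κ.ord, ∀ i, i < κ.ord → f ∉ W i := by
  have hl : Order.IsSuccLimit (κ.ord) := isSuccLimit_ord hunc.le
  have hinv := bSeq_inv hunc hreg W hW
  set g := bSeq κ.ord W with hg
  refine ⟨fun β => (g (β + 1)).1 β, ?_, ?_⟩
  · intro β hβ
    exact (hinv (β + 1) (hl.add_one_lt hβ)).1 β hβ
  · intro i hi
    refine (hinv i hi).2.2.2.2 _ ?_ ?_
    · intro β hβ
      exact (hinv (β + 1) (hl.add_one_lt hβ)).1 β hβ
    · intro β hβ
      have hβκ : β < κ.ord := hβ.trans (hinv i hi).2.1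
      have hβ1 : β + 1 < κ.ord := hl.add_one_lt hβκ
      rcases lt_trichotomy (β + 1) i with hc | hc | hc
      · exact ((hinv i hi).2.2.2.1 (β + 1) hc β
          (lt_of_lt_of_le (lt_add_one β) (hinv (β + 1) hβ1).2.2.1)).symm
      · rw [hc]
      · exact (hinv (β + 1) hβ1).2.2.2.1 i hc β hβ

lemma lower_bound {κ : Cardinal.{0}} (hunc : ℵ₀ < κ) (hreg : κ.IsRegular)
    (S : Set (Set (Ordinal.{0} → Ordinal.{0}))) (hS : ∀ A ∈ S, InMIdeal κ.ord A)
    (hcov : funSp κ.ord ⊆ ⋃₀ S) : Cardinal.lift.{1,0} κ < #S := by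
  classical
  have hl : Order.IsSuccLimit (κ.ord) := isSuccLimit_ord hunc.le
  by_contra hle
  push_neg at hle
  -- choose nwd decompositions
  have hch : ∀ A : ↥S, ∃ θ, θ < κ.ord ∧ ∃ B : Ordinal → Set (Ordinal → Ordinal),
      (∀ i, i < θ → IsNwd κ.ord (B i)) ∧ (A : Set (Ordinal → Ordinal)) ⊆ ⋃ i ∈ Iio θ, B i :=
    fun A => (hS A.1 A.2).2
  choose θA hθA BA hBnwd hBcov using hch
  set T : Set (Set (Ordinal → Ordinal)) :=
    insert ∅ (Set.range (fun q : ↥S × ↥(Iio κ.ord) =>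
      if (q.2 : Ordinal) < θA q.1 then BA q.1 q.2 else ∅)) with hT
  have hTnwd : ∀ X ∈ T, IsNwd κ.ord X := by
    rintro X (rfl | ⟨q, rfl⟩)
    · exact isNwd_empty κ.ord
    · dsimp only
      split_ifs with h
      · exact hBnwd q.1 q.2 h
      · exact isNwd_empty κ.ord
  have hTcard : #↥T ≤ Cardinal.lift.{1,0} κ := by
    refine le_trans Cardinal.mk_insert_le ?_
    have h1 : #↥(Set.range (fun q : ↥S × ↥(Iio κ.ord) =>
        if (q.2 : Ordinal) < θA q.1 then BA q.1 q.2 else ∅)) ≤ #(↥S × ↥(Iio κ.ord)) :=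
      Cardinal.mk_range_le
    rw [Cardinal.mk_prod, Cardinal.lift_id, Cardinal.lift_id, Ordinal.mk_Iio_ordinal,
      Cardinal.card_ord] at h1
    have h2 : #↥S * Cardinal.lift.{1,0} κ ≤ Cardinal.lift.{1,0} κ := by
      calc #↥S * Cardinal.lift.{1,0} κ ≤ Cardinal.lift.{1,0} κ * Cardinal.lift.{1,0} κ :=
            mul_le_mul_left hle _
        _ = Cardinal.lift.{1,0} κ := Cardinal.mul_eq_self
            (by rw [← Cardinal.lift_aleph0.{1,0}]; exact Cardinal.lift_le.2 hunc.le)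
    calc #↥(Set.range _) + 1 ≤ Cardinal.lift.{1,0} κ + 1 := add_le_add_left (h1.trans h2) 1
      _ = Cardinal.lift.{1,0} κ := Cardinal.add_one_eq
          (by rw [← Cardinal.lift_aleph0.{1,0}]; exact Cardinal.lift_le.2 hunc.le)
  have hTne : Nonempty ↥T := ⟨⟨∅, mem_insert _ _⟩⟩
  have hTle : #↥T ≤ #↥(Iio κ.ord) := by
    rwa [Ordinal.mk_Iio_ordinal, Cardinal.card_ord]
  obtain ⟨emb⟩ := (Cardinal.le_def _ _).1 hTle
  set σ : ↥(Iio κ.ord) → ↥T := Function.invFun emb with hσ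
  have hσsurj : Function.Surjective σ := Function.invFun_surjective emb.injective
  set W : Ordinal → Set (Ordinal → Ordinal) :=
    fun i => if h : i < κ.ord then (σ ⟨i, h⟩ : Set (Ordinal → Ordinal)) else ∅ with hW
  have hWnwd : ∀ i, IsNwd κ.ord (W i) := by
    intro i
    rw [hW]
    dsimp only
    split_ifs with h
    · exact hTnwd _ (σ ⟨i, h⟩).2
    · exact isNwd_empty κ.ord
  obtain ⟨f, hf, havoid⟩ := exists_avoiding hunc hreg W hWnwd
  obtain ⟨A, hA, hfA⟩ := hcov hf
  obtain ⟨i, hiθ, hfB⟩ := by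
    have := hBcov ⟨A, hA⟩ hfA
    simpa using this
  have hiκ : i < κ.ord := hiθ.trans (hθA ⟨A, hA⟩)
  have hXT : BA ⟨A, hA⟩ i ∈ T := by
    refine mem_insert_iff.2 (Or.inr ⟨(⟨A, hA⟩, ⟨i, hiκ⟩), ?_⟩)
    dsimp only
    rw [if_pos hiθ]
  obtain ⟨j, hj⟩ := hσsurj ⟨BA ⟨A, hA⟩ i, hXT⟩
  have : f ∈ W (j : Ordinal) := by
    rw [hW]
    dsimp only
    have hj2 : (j : Ordinal) < κ.ord := j.2
    rw [dif_pos hj2]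
    have hjj : (⟨(j : Ordinal), hj2⟩ : ↥(Iio κ.ord)) = j := Subtype.ext rfl
    rw [hjj, hj]
    exact hfB
  exact havoid (j : Ordinal) j.2 this

end Lower


/-- If `θ < λ = cf(λ) < 2^θ` (with `λ` uncountable), then `cov(M^λ_{λ,λ}) = λ⁺`. -/
theorem stmt16 (θ κ : Cardinal) (hunc : ℵ₀ < κ) (hreg : κ.IsRegular)
    (hθ : θ < κ) (hlt : κ < 2 ^ θ) :
    covM κ.ord = Cardinal.lift.{1,0} (Order.succ κ) := by
  obtain ⟨S, h1, h2, h3⟩ := exists_upper_family hunc hreg hθ hlt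
  apply le_antisymm
  · exact csInf_le' ⟨S, h1, h2, h3⟩
  · refine le_csInf ⟨_, S, h1, h2, h3⟩ ?_
    rintro c ⟨S', h1', h2', h3'⟩
    rw [Cardinal.lift_succ, ← h3']
    exact Order.succ_le_of_lt (lower_bound hunc hreg S' h1' h2')

end Sh830

end
end
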